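/- The stochastic transition relation of the Stochastic Brane Calculus respects structural congruence: if M ≡ N and M → μ, then N → μ. -/

import Mathlib

open MeasureTheory
open scoped ENNReal

namespace Brane

/-- Action names Λ (a countable set). -/
abbrev Name := ℕ
/-- Node names (for compartments), a countable set disjoint from Λ. -/
abbrev NName := ℕ

/-- Membranes of the Brane Calculus. -/
inductive Membrane : Type
  | zero : Membrane
  | par : Membrane → Membrane → Membrane
  | phago : Name → Membrane → Membrane
  | cophago : Name → Membrane → Membrane → Membrane  -- cophago n τ σ = ⊥phago_n(τ).σ
  | exo : Name → Membrane → Membrane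
  | coexo : Name → Membrane → Membrane
  | pino : Name → Membrane → Membrane → Membrane     -- pino n τ σ = pino_n(τ).σ
deriving DecidableEq

/-- Systems of the Brane Calculus. -/
inductive System : Type
  | void : System
  | comp : System → System → System
  | cell : Membrane → System → System
deriving DecidableEq

/-- Structural congruence on membranes. -/
inductive MCong : Membrane → Membrane → Prop
  | refl (σ) : MCong σ σ
  | symm {σ τ} : MCong σ τ → MCong τ σ
  | trans {σ τ ρ} : MCong σ τ → MCong τ ρ → MCong σ ρ
  | parComm (σ τ) : MCong (Membrane.par σ τ) (Membrane.par τ σ)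
  | parAssoc (σ τ ρ) : MCong (Membrane.par σ (Membrane.par τ ρ)) (Membrane.par (Membrane.par σ τ) ρ)
  | parZero (σ) : MCong (Membrane.par σ .zero) σ
  | par {σ τ} (ρ) : MCong σ τ → MCong (Membrane.par σ ρ) (Membrane.par τ ρ)
  | phago (n) {σ τ} : MCong σ τ → MCong (.phago n σ) (.phago n τ)
  | exo (n) {σ τ} : MCong σ τ → MCong (.exo n σ) (.exo n τ)
  | coexo (n) {σ τ} : MCong σ τ → MCong (.coexo n σ) (.coexo n τ)
  | cophago (n) {ρ ν σ τ} : MCong ρ ν → MCong σ τ → MCong (.cophago n ρ σ) (.cophago n ν τ)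
  | pino (n) {ρ ν σ τ} : MCong ρ ν → MCong σ τ → MCong (.pino n ρ σ) (.pino n ν τ)

/-- Structural congruence on systems. -/
inductive SCong : System → System → Prop
  | refl (P) : SCong P P
  | symm {P Q} : SCong P Q → SCong Q P
  | trans {P Q R} : SCong P Q → SCong Q R → SCong P R
  | compComm (P Q) : SCong (System.comp P Q) (System.comp Q P)
  | compAssoc (P Q R) : SCong (System.comp P (System.comp Q R)) (System.comp (System.comp P Q) R)
  | compVoid (P) : SCong (System.comp P .void) P
  | zeroVoid : SCong (System.cell .zero .void) .void
  | comp {P Q} (R) : SCong P Q → SCong (System.comp P R) (System.comp Q R)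
  | cell {σ τ P Q} : MCong σ τ → SCong P Q → SCong (.cell σ P) (.cell τ Q)

/-- ≡-equivalence class of a membrane. -/
def mcls (σ : Membrane) : Set Membrane := {τ | MCong σ τ}
/-- ≡-equivalence class of a system. -/
def scls (P : System) : Set System := {Q | SCong P Q}

/-- The σ-algebra Π on membranes, generated by the ≡-classes. -/
instance : MeasurableSpace Membrane := .generateFrom {S | ∃ σ, S = mcls σ}
/-- The σ-algebra Π on systems, generated by the ≡-classes. -/
instance : MeasurableSpace System := .generateFrom {S | ∃ P, S = scls P}

/-- The reduction relation of the Brane Calculus. -/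
inductive React : System → System → Prop
  | phago {n ρ τ τ₀ σ σ₀ P Q} :
      React (.comp (.cell ((Membrane.cophago n ρ τ).par τ₀) Q)
                   (.cell ((Membrane.phago n σ).par σ₀) P))
            (.cell (Membrane.par τ τ₀) (.comp (.cell ρ (.cell (Membrane.par σ σ₀) P)) Q))
  | exo {n τ τ₀ σ σ₀ P Q} :
      React (.cell ((Membrane.coexo n τ).par τ₀)
                   (.comp (.cell ((Membrane.exo n σ).par σ₀) P) Q))
            (.comp (.cell (Membrane.par (Membrane.par σ σ₀) (Membrane.par τ τ₀)) Q) P)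
  | pino {n ρ σ σ₀ P} :
      React (.cell ((Membrane.pino n ρ σ).par σ₀) P)
            (.cell (Membrane.par σ σ₀) (.comp (.cell ρ .void) P))
  | loc {P Q} (σ) : React P Q → React (.cell σ P) (.cell σ Q)
  | comp {P Q} (R) : React P Q → React (.comp P R) (.comp Q R)
  | equiv {P P' Q Q'} : SCong P P' → React P' Q' → SCong Q' Q → React P Q

/-- Membrane action labels A_mem. -/
inductive MLabel : Type
  | phago : Name → MLabel
  | exo : Name → MLabel
  | coexo : Name → MLabel
  | cophago : Name → MLabel
  | pino : Name → MLabel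
deriving DecidableEq

/-- System action labels A_sys. -/
inductive SLabel : Type
  | id : SLabel
  | ph : Name → SLabel
  | phB : Name → SLabel
  | ex : Name → SLabel
deriving DecidableEq

/-- Target (product) space of a membrane label, according to its arity. -/
def MLabel.T : MLabel → Type
  | .phago _ => Membrane
  | .exo _ => Membrane
  | .coexo _ => Membrane
  | .cophago _ => Membrane × Membrane
  | .pino _ => Membrane × Membrane

/-- Target (product) space of a system label, according to its arity. -/
def SLabel.T : SLabel → Type
  | .id => System
  | .ph _ => System × System
  | .phB _ => Membrane × Membrane × System × System
  | .ex _ => Membrane × System × System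

instance (a : MLabel) : MeasurableSpace a.T := by
  cases a <;> (dsimp [MLabel.T]; infer_instance)

instance (a : SLabel) : MeasurableSpace a.T := by
  cases a <;> (dsimp [SLabel.T]; infer_instance)

/-- A_mem-indexed families of measures Δ^{A_mem}(B,Π). -/
abbrev MMeas := ∀ a : MLabel, Measure a.T
/-- A_sys-indexed families of measures Δ^{A_sys}(B,Π). -/
abbrev SMeas := ∀ a : SLabel, Measure a.T

/-- Prefix constant [phago_n]_σ. -/
noncomputable def phagoMeas (ι : Name → ℝ≥0∞) (n : Name) (σ : Membrane) : MMeas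
  | .phago m => if n = m then ι n • Measure.dirac σ else 0
  | .exo _ => 0
  | .coexo _ => 0
  | .cophago _ => 0
  | .pino _ => 0

/-- Prefix constant [exo_n]_σ. -/
noncomputable def exoMeas (ι : Name → ℝ≥0∞) (n : Name) (σ : Membrane) : MMeas
  | .exo m => if n = m then ι n • Measure.dirac σ else 0
  | .phago _ => 0
  | .coexo _ => 0
  | .cophago _ => 0
  | .pino _ => 0

/-- Prefix constant [coexo_n]_σ. -/
noncomputable def coexoMeas (ι : Name → ℝ≥0∞) (n : Name) (σ : Membrane) : MMeas
  | .coexo m => if n = m then ι n • Measure.dirac σ else 0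
  | .phago _ => 0
  | .exo _ => 0
  | .cophago _ => 0
  | .pino _ => 0

/-- Prefix constant [cophago_n]_σ^τ. -/
noncomputable def cophagoMeas (ι : Name → ℝ≥0∞) (n : Name) (τ σ : Membrane) : MMeas
  | .cophago m => if n = m then ι n • Measure.dirac (σ, τ) else 0
  | .phago _ => 0
  | .exo _ => 0
  | .coexo _ => 0
  | .pino _ => 0

/-- Prefix constant [pino_n]_σ^τ. -/
noncomputable def pinoMeas (ι : Name → ℝ≥0∞) (n : Name) (τ σ : Membrane) : MMeas
  | .pino m => if n = m then ι n • Measure.dirac (σ, τ) else 0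
  | .phago _ => 0
  | .exo _ => 0
  | .coexo _ => 0
  | .cophago _ => 0

/-- The parallel operator μ ⊕_{σ,τ} μ' on A_mem-indexed families of measures. -/
noncomputable def mpar (μ μ' : MMeas) (σ τ : Membrane) : MMeas
  | .phago n => (μ (.phago n)).map (fun ρ => ρ.par τ) + (μ' (.phago n)).map (fun ρ => ρ.par σ)
  | .exo n => (μ (.exo n)).map (fun ρ => ρ.par τ) + (μ' (.exo n)).map (fun ρ => ρ.par σ)
  | .coexo n => (μ (.coexo n)).map (fun ρ => ρ.par τ) + (μ' (.coexo n)).map (fun ρ => ρ.par σ)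
  | .cophago n =>
      (μ (.cophago n)).map (fun p : Membrane × Membrane => (p.1.par τ, p.2)) +
      (μ' (.cophago n)).map (fun p : Membrane × Membrane => (p.1.par σ, p.2))
  | .pino n =>
      (μ (.pino n)).map (fun p : Membrane × Membrane => (p.1.par τ, p.2)) +
      (μ' (.pino n)).map (fun p : Membrane × Membrane => (p.1.par σ, p.2))

/-- The nesting operator μ ▹_{σ,P} ν on families of measures. -/
noncomputable def mnest (ι : Name → ℝ≥0∞) (μ : SMeas) (ν : MMeas) (σ : Membrane) (P : System) :
    SMeas
  | .ph n => (ν (.phago n) (mcls σ)) • Measure.dirac (System.cell σ P, System.void)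
  | .phB n =>
      ((ν (.cophago n)).prod (Measure.dirac (P, System.void))).map MeasurableEquiv.prodAssoc
  | .ex n => (ν (.exo n)).prod (Measure.dirac (P, System.void))
  | .id =>
      (μ .id).map (fun Q => System.cell σ Q) +
      Measure.sum (fun n : Name =>
        (ν (.pino n)).map (fun p : Membrane × Membrane =>
          System.cell p.1 ((System.cell p.2 System.void).comp P))) +
      Measure.sum (fun n : Name =>
        (ι n)⁻¹ •
          (((μ (.ex n)).prod (ν (.coexo n))).map
            (fun q : (Membrane × System × System) × Membrane =>
              (System.cell (q.1.1.par q.2) q.1.2.2).comp q.1.2.1)))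

/-- The composition operator μ ⊗_{P,Q} μ' on families of measures. -/
noncomputable def mcomp (ι : Name → ℝ≥0∞) (μ μ' : SMeas) (P Q : System) : SMeas
  | .ph n =>
      (μ (.ph n)).map (fun p : System × System => (p.1, p.2.comp Q)) +
      (μ' (.ph n)).map (fun p : System × System => (p.1, p.2.comp P))
  | .phB n =>
      (μ (.phB n)).map
        (fun p : Membrane × Membrane × System × System => (p.1, p.2.1, p.2.2.1, p.2.2.2.comp Q)) +
      (μ' (.phB n)).map
        (fun p : Membrane × Membrane × System × System => (p.1, p.2.1, p.2.2.1, p.2.2.2.comp P))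
  | .ex n =>
      (μ (.ex n)).map (fun p : Membrane × System × System => (p.1, p.2.1, p.2.2.comp Q)) +
      (μ' (.ex n)).map (fun p : Membrane × System × System => (p.1, p.2.1, p.2.2.comp P))
  | .id =>
      (μ .id).map (fun R => R.comp Q) + (μ' .id).map (fun R => R.comp P) +
      Measure.sum (fun n : Name =>
        (ι n)⁻¹ •
          (((μ (.ph n)).prod (μ' (.phB n))).map
            (fun q : (System × System) × (Membrane × Membrane × System × System) =>
              (System.cell q.2.1 ((System.cell q.2.2.1 q.1.1).comp q.2.2.2.1)).comp
                (q.1.2.comp q.2.2.2.2)))) +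
      Measure.sum (fun n : Name =>
        (ι n)⁻¹ •
          (((μ (.phB n)).prod (μ' (.ph n))).map
            (fun q : (Membrane × Membrane × System × System) × (System × System) =>
              (System.cell q.1.1 ((System.cell q.1.2.1 q.2.1).comp q.1.2.2.1)).comp
                (q.1.2.2.2.comp q.2.2))))

/-- The stochastic transition relation σ →_mem μ, given by the SOS rules
(zero), (pref), (pref-arg), (par). -/
inductive MTrans (ι : Name → ℝ≥0∞) : Membrane → MMeas → Prop
  | zero : MTrans ι .zero 0
  | phago {n σ} : MTrans ι (.phago n σ) (phagoMeas ι n σ)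
  | exo {n σ} : MTrans ι (.exo n σ) (exoMeas ι n σ)
  | coexo {n σ} : MTrans ι (.coexo n σ) (coexoMeas ι n σ)
  | cophago {n τ σ} : MTrans ι (.cophago n τ σ) (cophagoMeas ι n τ σ)
  | pino {n τ σ} : MTrans ι (.pino n τ σ) (pinoMeas ι n τ σ)
  | par {σ τ μ μ'} : MTrans ι σ μ → MTrans ι τ μ' → MTrans ι (Membrane.par σ τ) (mpar μ μ' σ τ)

/-- The stochastic transition relation P →_sys μ, given by the SOS rules
(void), (loc), (comp). -/
inductive STrans (ι : Name → ℝ≥0∞) : System → SMeas → Prop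
  | void : STrans ι .void 0
  | cell {σ P ν μ} : MTrans ι σ ν → STrans ι P μ → STrans ι (.cell σ P) (mnest ι μ ν σ P)
  | comp {P Q μ μ'} : STrans ι P μ → STrans ι Q μ' → STrans ι (System.comp P Q) (mcomp ι μ μ' P Q)

end Brane
namespace Brane

/-! ### Normal forms -/

/-- Compose `n` copies of `C` in front of `R`. -/
def prependCopies : ℕ → System → System → System
  | 0, _, R => R
  | n + 1, C, R => System.comp C (prependCopies n C R)

/-- `n` copies of `C` composed in parallel. -/
def copies (n : ℕ) (C : System) : System := prependCopies n C .void

/-- Systems in normal form: n₁·σ₁(|Q₁|) ∘ … ∘ n_k·σ_k(|Q_k|). -/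
inductive NF : Type
  | nil : NF
  | cons (n : ℕ) (σ : Membrane) (inner rest : NF) : NF

/-- Unfolding ⌈Q⌉ of a normal form into a system. -/
def NF.unfold : NF → System
  | .nil => .void
  | .cons n σ Q₁ Q₂ => prependCopies n (System.cell σ Q₁.unfold) Q₂.unfold

/-- The list of top-level cells of a normal form. -/
def NF.cellsList : NF → List (Membrane × NF)
  | .nil => []
  | .cons _ σ Q₁ Q₂ => (σ, Q₁) :: Q₂.cellsList

/-- Well-formedness of normal forms: positive multiplicities, subsystems in
normal form, and pairwise non-congruent top-level cells. -/
inductive NF.Good : NF → Prop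
  | nil : Good .nil
  | cons {n σ Q₁ Q₂} : 0 < n → Good Q₁ → Good Q₂ →
      (∀ p ∈ Q₂.cellsList, ¬ SCong (System.cell σ Q₁.unfold) (System.cell p.1 p.2.unfold)) →
      Good (.cons n σ Q₁ Q₂)

/-! ### Species -/

/-- Actions (prefix-headed membranes). -/
inductive Action : Type
  | phago : Name → Membrane → Action
  | cophago : Name → Membrane → Membrane → Action
  | exo : Name → Membrane → Action
  | coexo : Name → Membrane → Action
  | pino : Name → Membrane → Membrane → Action
deriving DecidableEq

/-- The membrane denoted by an action. -/
def Action.toMem : Action → Membrane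
  | .phago n σ => .phago n σ
  | .cophago n ρ σ => .cophago n ρ σ
  | .exo n σ => .exo n σ
  | .coexo n σ => .coexo n σ
  | .pino n ρ σ => .pino n ρ σ

/-- A species C(|^x_y|) : a complex located in compartment x with inner compartment y. -/
structure Species : Type where
  C : Finset Action
  x : NName
  y : NName
deriving DecidableEq

/-- Populations: finite multisets of species. -/
abbrev Population := Species →₀ ℕ

/-- Node names occurring in a population. -/
def pfnPop (S : Population) : Finset NName := S.support.biUnion fun I => {I.x, I.y}

/-- The function s(·) mapping a membrane to a complex. -/
def complexOf : Membrane → Finset Action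
  | .zero => ∅
  | .par σ τ => complexOf σ ∪ complexOf τ
  | .phago n σ => {Action.phago n σ}
  | .cophago n ρ σ => {Action.cophago n ρ σ}
  | .exo n σ => {Action.exo n σ}
  | .coexo n σ => {Action.coexo n σ}
  | .pino n ρ σ => {Action.pino n ρ σ}

/-- The translation species_{E,x}(Q) of a normal form into a species population
(relational because of the choice of fresh names). -/
inductive NFSpecies : Finset NName → NName → NF → Population → Prop
  | nil {E x} : NFSpecies E x .nil 0
  | cons {E : Finset NName} {x : NName} {n σ Q₁ Q₂ y J₁ J₂} :
      y ∉ E →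
      NFSpecies (insert y E) y Q₁ J₁ →
      NFSpecies E x Q₂ J₂ →
      (pfnPop J₁ ∩ pfnPop J₂ ⊆ {x}) →
      NFSpecies E x (.cons n σ Q₁ Q₂)
        (Finsupp.single ⟨complexOf σ, x, y⟩ n + J₁ + J₂)

/-- species_{∅,x}(P): translation of a system `P` (via a normal form of `P`)
into a species population located at `x`. -/
def SpeciesOfSys (x : NName) (P : System) (J : Population) : Prop :=
  ∃ Q : NF, NF.Good Q ∧ SCong Q.unfold P ∧ NFSpecies {x} x Q J

/-- A root name of a species population. -/
def IsRoot (S : Population) (x : NName) : Prop :=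
  (∃ I ∈ S.support, I.x = x) ∧ ∀ I ∈ S.support, I.y ≠ x

/-! ### Decoding -/

/-- Decoding ⟪C⟫ of a complex into a membrane. -/
noncomputable def decodeComplex (C : Finset Action) : Membrane :=
  (C.toList.map Action.toMem).foldr Membrane.par .zero

/-- The species of `S` located at `x`. -/
def speciesAt (S : Population) (x : NName) : Finset Species :=
  S.support.filter fun I => I.x = x

mutual
/-- Decoding ⟪S⟫_x of a species population into a system (relational; it is
defined exactly when the nesting structure of `S` below `x` is well founded). -/
inductive Decodes : Population → NName → System → Prop
  | mk {S : Population} {x : NName} {l : List Species} {P : System} :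
      l.Perm (speciesAt S x).toList → DecList S l P → Decodes S x P

/-- Decoding of a list of species (one top-level compartment each). -/
inductive DecList : Population → List Species → System → Prop
  | nil {S} : DecList S [] .void
  | cons {S : Population} {I : Species} {l : List Species} {P' Q : System} :
      Decodes S I.y P' → DecList S l Q →
      DecList S (I :: l)
        (System.comp (copies (S I) (System.cell (decodeComplex I.C) P')) Q)
end

end Brane
namespace Brane

/-! ### The COW Generic Stochastic Abstract Machine (Brane Calculus instance) -/

/-- A reaction O = (S₁, r, f, S₂); the global update function f is, in the Brane
Calculus instantiation, either the identity (`none`) or a substitution of node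
names T[w := x] (`some (w, x)`). -/
structure Reaction : Type where
  reac : Population
  rate : ℝ≥0∞
  upd : Option (NName × NName)
  prod : Population

/-- An activity: the scheduled time t' and the propensity a of a reaction. -/
abbrev Activity := ℝ × ℝ≥0∞

/-- The reaction map R, associating activities to reactions. -/
abbrev RMap := List (Reaction × Activity)

/-- A machine term E ⊢ (t, S, R). -/
structure MachTerm : Type where
  env : Finset NName
  time : ℝ
  pop : Population
  rxns : RMap

/-- A machine state (t, S, R). -/
abbrev MState := ℝ × Population × RMap

/-- S*(I): population of a species multiplied along the chain of enclosing
compartments up to the root. -/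
inductive StarPop (S : Population) : Species → ℕ → Prop
  | root {I} : (∀ J ∈ S.support, J.y ≠ I.x) → StarPop S I (S I)
  | step {I J m} : J ∈ S.support → J.y = I.x → StarPop S J m → StarPop S I (S I * m)

/-- The mass-action propensity of a reaction in population `S`. -/
def PropensityIs (O : Reaction) (S : Population) (a : ℝ≥0∞) : Prop :=
  ∃ g : Species → ℕ,
    (∀ I ∈ O.reac.support, StarPop S I (g I)) ∧
    a = O.rate * ∏ I ∈ O.reac.support, ((g I).choose (O.reac I) : ℝ≥0∞)

/-- init(L,(t,S,R)): schedule each reaction of `L` with its propensity in `S`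
and a stochastic delay. -/
def InitRel (t : ℝ) (S : Population) (L : List Reaction) (out : RMap) : Prop :=
  List.Forall₂
    (fun O q => q.1 = O ∧ PropensityIs O S q.2.2 ∧ ∃ d : ℝ, 0 ≤ d ∧ q.2.1 = t + d) L out

/-- updates(I,(t,S,R)): recompute the activities of the reactions involving `I`. -/
def UpdatesSpec (Iu : Species) (t : ℝ) (S : Population) (R out : RMap) : Prop :=
  List.Forall₂
    (fun p q => q.1 = p.1 ∧ PropensityIs p.1 S q.2.2 ∧
      (if t < p.2.1 then q.2.1 = t + ((p.2.2 / q.2.2).toReal) * (p.2.1 - t)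
       else ∃ d : ℝ, 0 ≤ d ∧ q.2.1 = t + d))
    (R.filter fun p => decide (0 < p.1.reac Iu)) out

open Classical in
/-- Right-biased union R ∪ R' of reaction maps. -/
noncomputable def override (R R' : RMap) : RMap :=
  R' ++ R.filter fun p => decide (∀ q ∈ R', q.1 ≠ p.1)

/-- The reactions of the Brane Calculus instantiation: unary pinocytosis and
binary exocytosis/phagocytosis reactions of the (new) species `I₁` against the
population `S`, with rates given by ι. -/
inductive ReactionOf (ι : Name → ℝ≥0∞) (E : Finset NName) (I₁ : Species) (S : Population) :
    Reaction → Prop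
  | pino {n ρ σ w} :
      Action.pino n ρ σ ∈ I₁.C → w ∉ E →
      ReactionOf ι E I₁ S
        ⟨Finsupp.single I₁ 1, ι n, none,
          Finsupp.single ⟨complexOf σ ∪ I₁.C.erase (.pino n ρ σ), I₁.x, I₁.y⟩ 1 +
          Finsupp.single ⟨complexOf ρ, I₁.y, w⟩ 1⟩
  | exoUp {n τ σ I₂} :
      I₂ ∈ S.support → Action.coexo n τ ∈ I₁.C → Action.exo n σ ∈ I₂.C → I₂.x = I₁.y →
      ReactionOf ι E I₁ S
        ⟨Finsupp.single I₁ 1 + Finsupp.single I₂ 1, ι n, some (I₂.y, I₁.x),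
          Finsupp.single
            ⟨(complexOf τ ∪ I₁.C.erase (.coexo n τ)) ∪ (complexOf σ ∪ I₂.C.erase (.exo n σ)),
              I₁.x, I₁.y⟩ 1⟩
  | exoDown {n τ σ I₂} :
      I₂ ∈ S.support → Action.coexo n τ ∈ I₂.C → Action.exo n σ ∈ I₁.C → I₁.x = I₂.y →
      ReactionOf ι E I₁ S
        ⟨Finsupp.single I₁ 1 + Finsupp.single I₂ 1, ι n, some (I₁.y, I₂.x),
          Finsupp.single
            ⟨(complexOf τ ∪ I₂.C.erase (.coexo n τ)) ∪ (complexOf σ ∪ I₁.C.erase (.exo n σ)),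
              I₂.x, I₂.y⟩ 1⟩
  | phagoL {n ρ τ σ I₂ w} :
      I₂ ∈ S.support → Action.cophago n ρ τ ∈ I₁.C → Action.phago n σ ∈ I₂.C →
      I₂.x = I₁.x → w ∉ E →
      ReactionOf ι E I₁ S
        ⟨Finsupp.single I₁ 1 + Finsupp.single I₂ 1, ι n, none,
          Finsupp.single ⟨complexOf τ ∪ I₁.C.erase (.cophago n ρ τ), I₁.x, I₁.y⟩ 1 +
          Finsupp.single ⟨complexOf ρ, I₁.y, w⟩ 1 +
          Finsupp.single ⟨complexOf σ ∪ I₂.C.erase (.phago n σ), w, I₂.y⟩ 1⟩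
  | phagoR {n ρ τ σ I₂ w} :
      I₂ ∈ S.support → Action.cophago n ρ τ ∈ I₂.C → Action.phago n σ ∈ I₁.C →
      I₂.x = I₁.x → w ∉ E →
      ReactionOf ι E I₁ S
        ⟨Finsupp.single I₁ 1 + Finsupp.single I₂ 1, ι n, none,
          Finsupp.single ⟨complexOf τ ∪ I₂.C.erase (.cophago n ρ τ), I₂.x, I₂.y⟩ 1 +
          Finsupp.single ⟨complexOf ρ, I₂.y, w⟩ 1 +
          Finsupp.single ⟨complexOf σ ∪ I₁.C.erase (.phago n σ), w, I₁.y⟩ 1⟩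

/-- `L` is (a representative listing of) reactions(I ↦ i, S). -/
def ReactionsSpec (ι : Name → ℝ≥0∞) (E : Finset NName) (I : Species) (S : Population)
    (L : List Reaction) : Prop :=
  (∀ O ∈ L, ReactionOf ι E I S O) ∧
  (∀ O, ReactionOf ι E I S O → ∃ O' ∈ L, O'.reac = O.reac ∧ O'.rate = O.rate)

/-- The operation I ↦ i ⊕ (t, S, R). -/
inductive OPlusOne (ι : Name → ℝ≥0∞) (E : Finset NName) : Species → ℕ → MState → MState → Prop
  | old {I : Species} {i : ℕ} {t S R out} :
      I ∈ S.support →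
      UpdatesSpec I t (S + Finsupp.single I i) R out →
      OPlusOne ι E I i (t, S, R) (t, S + Finsupp.single I i, override R out)
  | new {I : Species} {i : ℕ} {t S R L out} :
      I ∉ S.support →
      ReactionsSpec ι E I S L →
      InitRel t (S + Finsupp.single I i) L out →
      OPlusOne ι E I i (t, S, R) (t, S + Finsupp.single I i, R ++ out)

/-- The operation (t, S, R) ⊖ I ↦ i. -/
inductive OMinusOne : Species → ℕ → MState → MState → Prop
  | mk {I : Species} {i : ℕ} {t S R out} :
      i ≤ S I →
      UpdatesSpec I t (Finsupp.update S I (S I - i)) R out →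
      OMinusOne I i (t, S, R) (t, Finsupp.update S I (S I - i), override R out)

/-- Iterated ⊕ of a population listed as (species, multiplicity) pairs. -/
inductive OPlusStar (ι : Name → ℝ≥0∞) (E : Finset NName) :
    List (Species × ℕ) → MState → MState → Prop
  | nil {st} : OPlusStar ι E [] st st
  | cons {I i l st st' st''} :
      OPlusOne ι E I i st st' → OPlusStar ι E l st' st'' →
      OPlusStar ι E ((I, i) :: l) st st''

/-- Iterated ⊖ of a population listed as (species, multiplicity) pairs. -/
inductive OMinusStar : List (Species × ℕ) → MState → MState → Prop
  | nil {st} : OMinusStar [] st st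
  | cons {I i l st st' st''} :
      OMinusOne I i st st' → OMinusStar l st' st'' →
      OMinusStar ((I, i) :: l) st st''

/-- List the species of a population together with their multiplicities. -/
noncomputable def popToList (S : Population) : List (Species × ℕ) :=
  S.support.toList.map fun I => (I, S I)

/-- `Reach S x z`: compartment `z` is (hereditarily) nested inside compartment `x`. -/
inductive Reach (S : Population) : NName → NName → Prop
  | refl (x) : Reach S x x
  | step {x : NName} {I : Species} : Reach S x I.x → I ∈ S.support → Reach S x I.y

open Classical in
/-- The copy (under the renaming `g`) of the subtree of `S` rooted at `y`. -/
noncomputable def copySub (g : NName → NName) (S : Population) (y : NName) : Population :=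
  S.sum fun I n => if Reach S y I.x then Finsupp.single ⟨I.C, g I.x, g I.y⟩ n else 0

/-- dup(E ⊢ (t,S,R), y, y'): deep duplication of the subtree rooted at `y` as a
new subtree rooted at `y'`, initializing the reactions of the new species. -/
def DupRel (ι : Name → ℝ≥0∞) (E : Finset NName) (t : ℝ) (S : Population) (R : RMap)
    (y y' : NName) (E' : Finset NName) (S' : Population) (R' : RMap) : Prop :=
  ∃ g : NName → NName,
    g y = y' ∧
    (∀ z, Reach S y z → z ≠ y → g z ∉ E) ∧
    (∀ z w, Reach S y z → Reach S y w → g z = g w → z = w) ∧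
    S' = S + copySub g S y ∧
    E' = E ∪ pfnPop S' ∧
    ∃ L out,
      (∀ O ∈ L, ∃ I ∈ (copySub g S y).support, ReactionOf ι E' I S' O) ∧
      (∀ I ∈ (copySub g S y).support, ∀ O, ReactionOf ι E' I S' O →
        ∃ O' ∈ L, O'.reac = O.reac ∧ O'.rate = O.rate) ∧
      InitRel t S' L out ∧ R' = R ++ out

/-- Split the multiplicity of the species `I`, keeping `keep` instances with the
old inner name and giving the remaining instances a fresh inner name, and deep
copy the tree hanging below `I` for the new instances. -/
def SplitCopy (ι : Name → ℝ≥0∞) (m : MachTerm) (I : Species) (keep : ℕ) (fresh : NName)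
    (m' : MachTerm) : Prop :=
  fresh ∉ m.env ∧
  ∃ S₀ E' S' R',
    S₀ = Finsupp.update m.pop I keep + Finsupp.single ⟨I.C, I.x, fresh⟩ (m.pop I - keep) ∧
    DupRel ι (insert fresh m.env) m.time S₀ m.rxns I.y fresh E' S' R' ∧
    ∃ L out,
      ReactionsSpec ι E' ⟨I.C, I.x, fresh⟩ S₀ L ∧
      InitRel m.time S' L out ∧
      m' = ⟨E', m.time, S', R' ++ out⟩

/-- The parent-unfolding step of cow: if the compartment `y` lies inside a
compartment with multiplicity > 1, split off a private copy of the parent. -/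
def ParentSplit (ι : Name → ℝ≥0∞) (m : MachTerm) (y : NName) (m' : MachTerm) : Prop :=
  ((∀ Ip ∈ m.pop.support, Ip.y = y → m.pop Ip ≤ 1) ∧ m' = m) ∨
  (∃ Ip ∈ m.pop.support, Ip.y = y ∧ 1 < m.pop Ip ∧ ∃ y', SplitCopy ι m Ip 1 y' m')

/-- The cow step for a single reactant species `I` with multiplicity `j`. -/
def CowStep (ι : Name → ℝ≥0∞) (m : MachTerm) (Ij : Species × ℕ) (m' : MachTerm) : Prop :=
  ∃ m₁, ParentSplit ι m Ij.1.x m₁ ∧ ∃ z', SplitCopy ι m₁ Ij.1 Ij.2 z' m'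

/-- cow(E ⊢ (t,S,R), S₁): copy-on-write unfolding of all the compartments
occurring in the reactant population. -/
inductive CowRel (ι : Name → ℝ≥0∞) : MachTerm → List (Species × ℕ) → MachTerm → Prop
  | nil {m} : CowRel ι m [] m
  | cons {m Ij l m' m''} :
      CowStep ι m Ij m' → CowRel ι m' l m'' → CowRel ι m ((Ij.1, Ij.2) :: l) m''

/-- Apply a node-name substitution. -/
def rn : Option (NName × NName) → NName → NName
  | none, z => z
  | some (w, x), z => if z = w then x else z

def renSpecies (f : Option (NName × NName)) (I : Species) : Species :=
  ⟨I.C, rn f I.x, rn f I.y⟩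

noncomputable def renPop (f : Option (NName × NName)) (S : Population) : Population :=
  Finsupp.mapDomain (renSpecies f) S

noncomputable def renReaction (f : Option (NName × NName)) (O : Reaction) : Reaction :=
  ⟨renPop f O.reac, O.rate, O.upd, renPop f O.prod⟩

noncomputable def renRMap (f : Option (NName × NName)) (R : RMap) : RMap :=
  R.map fun p => (renReaction f p.1, p.2)

/-- Apply the global update function f of a reaction to a machine term. -/
noncomputable def applyUpd (f : Option (NName × NName)) (m : MachTerm) : MachTerm :=
  ⟨m.env.image (rn f), m.time, renPop f m.pop, renRMap f m.rxns⟩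

/-- The transition relation T →^{a,O} T' of the COWGSAM (with the Next Reaction
method and the identity normalization function). -/
inductive MachStep (ι : Name → ℝ≥0∞) : MachTerm → ℝ≥0∞ → Reaction → MachTerm → Prop
  | mk {m : MachTerm} {O : Reaction} {a : ℝ≥0∞} {t' : ℝ} {mc : MachTerm} {st₁ st₂ : MState} :
      (O, (t', a)) ∈ m.rxns →
      (∀ p ∈ m.rxns, t' ≤ p.2.1) →
      CowRel ι m (popToList O.reac) mc →
      OMinusStar (popToList O.reac) (t', mc.pop, mc.rxns) st₁ →
      OPlusStar ι mc.env (popToList O.prod) st₁ st₂ →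
      MachStep ι m a O
        (applyUpd O.upd ⟨mc.env ∪ pfnPop O.prod, st₂.1, st₂.2.1, st₂.2.2⟩)

/-- The initial machine term ⟦P⟧_x = fn(J) ⊢ J ⊕ (0, ∅, ∅), J = species_{∅,x}(P). -/
def InitMach (ι : Name → ℝ≥0∞) (x : NName) (P : System) (m : MachTerm) : Prop :=
  ∃ (J : Population) (st : MState),
    SpeciesOfSys x P J ∧
    OPlusStar ι (pfnPop J) (popToList J) (0, 0, []) st ∧
    m = ⟨pfnPop J, st.1, st.2.1, st.2.2⟩

end Brane

namespace Brane

/-! #### Countability -/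

private def mcode : Membrane → ℕ
  | .zero => 0
  | .par a b => Nat.pair (mcode a) (mcode b) * 7 + 1
  | .phago n a => Nat.pair n (mcode a) * 7 + 2
  | .cophago n a b => Nat.pair n (Nat.pair (mcode a) (mcode b)) * 7 + 3
  | .exo n a => Nat.pair n (mcode a) * 7 + 4
  | .coexo n a => Nat.pair n (mcode a) * 7 + 5
  | .pino n a b => Nat.pair n (Nat.pair (mcode a) (mcode b)) * 7 + 6

private lemma mcode_inj : ∀ a b : Membrane, mcode a = mcode b → a = b := by
  intro a
  induction a with
  | zero => intro b h; cases b <;> simp only [mcode] at h <;> first | rfl | omega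
  | par a₁ a₂ ih₁ ih₂ =>
      intro b h; cases b <;> simp only [mcode] at h <;> try omega
      case par b₁ b₂ =>
        have h2 : Nat.pair (mcode a₁) (mcode a₂) = Nat.pair (mcode b₁) (mcode b₂) := by omega
        obtain ⟨e1, e2⟩ := Nat.pair_eq_pair.mp h2
        rw [ih₁ _ e1, ih₂ _ e2]
  | phago n a ih =>
      intro b h; cases b <;> simp only [mcode] at h <;> try omega
      case phago m b =>
        have h2 : Nat.pair n (mcode a) = Nat.pair m (mcode b) := by omega
        obtain ⟨e1, e2⟩ := Nat.pair_eq_pair.mp h2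
        rw [e1, ih _ e2]
  | cophago n a₁ a₂ ih₁ ih₂ =>
      intro b h; cases b <;> simp only [mcode] at h <;> try omega
      case cophago m b₁ b₂ =>
        have h2 : Nat.pair n (Nat.pair (mcode a₁) (mcode a₂))
            = Nat.pair m (Nat.pair (mcode b₁) (mcode b₂)) := by omega
        obtain ⟨e1, e2⟩ := Nat.pair_eq_pair.mp h2
        obtain ⟨e3, e4⟩ := Nat.pair_eq_pair.mp e2
        rw [e1, ih₁ _ e3, ih₂ _ e4]
  | exo n a ih =>
      intro b h; cases b <;> simp only [mcode] at h <;> try omega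
      case exo m b =>
        have h2 : Nat.pair n (mcode a) = Nat.pair m (mcode b) := by omega
        obtain ⟨e1, e2⟩ := Nat.pair_eq_pair.mp h2
        rw [e1, ih _ e2]
  | coexo n a ih =>
      intro b h; cases b <;> simp only [mcode] at h <;> try omega
      case coexo m b =>
        have h2 : Nat.pair n (mcode a) = Nat.pair m (mcode b) := by omega
        obtain ⟨e1, e2⟩ := Nat.pair_eq_pair.mp h2
        rw [e1, ih _ e2]
  | pino n a₁ a₂ ih₁ ih₂ =>
      intro b h; cases b <;> simp only [mcode] at h <;> try omega
      case pino m b₁ b₂ =>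
        have h2 : Nat.pair n (Nat.pair (mcode a₁) (mcode a₂))
            = Nat.pair m (Nat.pair (mcode b₁) (mcode b₂)) := by omega
        obtain ⟨e1, e2⟩ := Nat.pair_eq_pair.mp h2
        obtain ⟨e3, e4⟩ := Nat.pair_eq_pair.mp e2
        rw [e1, ih₁ _ e3, ih₂ _ e4]

instance : Countable Membrane := ⟨⟨mcode, fun _ _ h => mcode_inj _ _ h⟩⟩

private def scode : System → ℕ
  | .void => 0
  | .comp a b => Nat.pair (scode a) (scode b) * 3 + 1
  | .cell m a => Nat.pair (mcode m) (scode a) * 3 + 2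

private lemma scode_inj : ∀ a b : System, scode a = scode b → a = b := by
  intro a
  induction a with
  | void => intro b h; cases b <;> simp only [scode] at h <;> first | rfl | omega
  | comp a₁ a₂ ih₁ ih₂ =>
      intro b h; cases b <;> simp only [scode] at h <;> try omega
      case comp b₁ b₂ =>
        have h2 : Nat.pair (scode a₁) (scode a₂) = Nat.pair (scode b₁) (scode b₂) := by omega
        obtain ⟨e1, e2⟩ := Nat.pair_eq_pair.mp h2
        rw [ih₁ _ e1, ih₂ _ e2]
  | cell m a ih =>
      intro b h; cases b <;> simp only [scode] at h <;> try omega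
      case cell m' b =>
        have h2 : Nat.pair (mcode m) (scode a) = Nat.pair (mcode m') (scode b) := by omega
        obtain ⟨e1, e2⟩ := Nat.pair_eq_pair.mp h2
        rw [mcode_inj _ _ e1, ih _ e2]

instance : Countable System := ⟨⟨scode, fun _ _ h => scode_inj _ _ h⟩⟩

instance (a : MLabel) : Countable a.T := by
  cases a <;> (dsimp [MLabel.T]; infer_instance)

instance (a : SLabel) : Countable a.T := by
  cases a <;> (dsimp [SLabel.T]; infer_instance)

/-! #### Derived congruences -/

lemma MCong.par_right {τ τ' : Membrane} (σ : Membrane) (h : MCong τ τ') :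
    MCong (σ.par τ) (σ.par τ') :=
  ((MCong.parComm σ τ).trans (MCong.par σ h)).trans (MCong.parComm τ' σ)

lemma MCong.par₂ {σ σ' τ τ' : Membrane} (h : MCong σ σ') (h' : MCong τ τ') :
    MCong (σ.par τ) (σ'.par τ') :=
  (MCong.par τ h).trans (MCong.par_right σ' h')

lemma SCong.comp_right {Q Q' : System} (P : System) (h : SCong Q Q') :
    SCong (P.comp Q) (P.comp Q') :=
  ((SCong.compComm P Q).trans (SCong.comp P h)).trans (SCong.compComm Q' P)

lemma SCong.comp₂ {P P' Q Q' : System} (h : SCong P P') (h' : SCong Q Q') :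
    SCong (P.comp Q) (P'.comp Q') :=
  (SCong.comp Q h).trans (SCong.comp_right P' h')

/-! #### Saturated σ-algebras -/

/-- The σ-algebra of `R`-saturated sets. -/
def satMS {X : Type*} (R : X → X → Prop) : MeasurableSpace X where
  MeasurableSet' S := ∀ ⦃x y⦄, R x y → (x ∈ S ↔ y ∈ S)
  measurableSet_empty := fun _ _ _ => Iff.rfl
  measurableSet_compl := fun S hS x y h => by simp only [Set.mem_compl_iff, hS h]
  measurableSet_iUnion := fun f hf x y h => by
    simp only [Set.mem_iUnion]
    exact exists_congr fun i => hf i h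

/-- A measurable space whose σ-algebra is exactly that of `R`-saturated sets,
for an equivalence(-like) relation `R` with measurable classes. -/
class Sat (X : Type*) [MeasurableSpace X] where
  R : X → X → Prop
  refl : ∀ x, R x x
  symm : ∀ ⦃x y⦄, R x y → R y x
  meas_cls : ∀ x, MeasurableSet {y | R x y}
  sat : ∀ ⦃S : Set X⦄, MeasurableSet S → ∀ ⦃x y⦄, R x y → x ∈ S → y ∈ S

lemma mcls_eq (σ : Membrane) : mcls σ = {y | MCong σ y} := rfl

instance : Sat Membrane where
  R := MCong
  refl := MCong.refl
  symm := fun _ _ h => h.symm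
  meas_cls x := MeasurableSpace.measurableSet_generateFrom ⟨x, rfl⟩
  sat := by
    have hle : (inferInstance : MeasurableSpace Membrane) ≤ satMS MCong :=
      MeasurableSpace.generateFrom_le (by
        rintro _ ⟨σ, rfl⟩ x y h
        exact ⟨fun hx => hx.trans h, fun hy => hy.trans h.symm⟩)
    exact fun S hS x y h hx => (hle S hS h).mp hx

instance : Sat System where
  R := SCong
  refl := SCong.refl
  symm := fun _ _ h => h.symm
  meas_cls x := MeasurableSpace.measurableSet_generateFrom ⟨x, rfl⟩
  sat := by
    have hle : (inferInstance : MeasurableSpace System) ≤ satMS SCong :=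
      MeasurableSpace.generateFrom_le (by
        rintro _ ⟨P, rfl⟩ x y h
        exact ⟨fun hx => hx.trans h, fun hy => hy.trans h.symm⟩)
    exact fun S hS x y h hx => (hle S hS h).mp hx

instance Sat.prodInst {X Y : Type*} [MeasurableSpace X] [MeasurableSpace Y] [Sat X] [Sat Y] :
    Sat (X × Y) where
  R p q := Sat.R p.1 q.1 ∧ Sat.R p.2 q.2
  refl p := ⟨Sat.refl _, Sat.refl _⟩
  symm := fun _ _ h => ⟨Sat.symm h.1, Sat.symm h.2⟩
  meas_cls p := (Sat.meas_cls p.1).prod (Sat.meas_cls p.2)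
  sat := by
    have hle : (inferInstance : MeasurableSpace (X × Y)) ≤
        satMS (fun p q : X × Y => Sat.R p.1 q.1 ∧ Sat.R p.2 q.2) := by
      refine sup_le ?_ ?_
      · rintro _ ⟨A, hA, rfl⟩ x y h
        exact ⟨fun hx => Sat.sat hA h.1 hx, fun hy => Sat.sat hA (Sat.symm h.1) hy⟩
      · rintro _ ⟨A, hA, rfl⟩ x y h
        exact ⟨fun hx => Sat.sat hA h.2 hx, fun hy => Sat.sat hA (Sat.symm h.2) hy⟩
    exact fun S hS x y h hx => (hle S hS h).mp hx

lemma measSet_of_sat {X : Type*} [MeasurableSpace X] [Sat X] [Countable X] {S : Set X}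
    (h : ∀ ⦃x y⦄, Sat.R x y → x ∈ S → y ∈ S) : MeasurableSet S := by
  have hU : S = ⋃ x ∈ S, {y | Sat.R x y} := by
    ext z
    simp only [Set.mem_iUnion, Set.mem_setOf_eq]
    exact ⟨fun hz => ⟨z, hz, Sat.refl z⟩, fun ⟨x, hx, hxz⟩ => h hxz hx⟩
  rw [hU]
  exact MeasurableSet.biUnion (Set.to_countable S) fun x _ => Sat.meas_cls x

lemma measurable_of_sat {X Y : Type*} [MeasurableSpace X] [MeasurableSpace Y] [Sat X] [Sat Y]
    [Countable X] {f : X → Y} (hf : ∀ ⦃x y⦄, Sat.R x y → Sat.R (f x) (f y)) : Measurable f :=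
  fun _S hS => measSet_of_sat fun _x _y hxy hx => Sat.sat hS (hf hxy) hx

lemma map_sat_congr {X Y : Type*} [MeasurableSpace X] [MeasurableSpace Y] [Sat X] [Sat Y]
    [Countable X] {f g : X → Y}
    (hf : ∀ ⦃x y⦄, Sat.R x y → Sat.R (f x) (f y))
    (hg : ∀ ⦃x y⦄, Sat.R x y → Sat.R (g x) (g y))
    (hfg : ∀ x, Sat.R (f x) (g x)) (μ : Measure X) : μ.map f = μ.map g := by
  ext S hS
  rw [Measure.map_apply (measurable_of_sat hf) hS, Measure.map_apply (measurable_of_sat hg) hS]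
  congr 1
  ext x
  exact ⟨fun h => Sat.sat hS (hfg x) h, fun h => Sat.sat hS (Sat.symm (hfg x)) h⟩

lemma map_map_congr {X Y Z : Type*} [MeasurableSpace X] [MeasurableSpace Y] [MeasurableSpace Z]
    [Sat X] [Sat Y] [Sat Z] [Countable X] [Countable Y] {f : X → Y} {g : Y → Z} {h : X → Z}
    (hf : ∀ ⦃x y⦄, Sat.R x y → Sat.R (f x) (f y))
    (hg : ∀ ⦃x y⦄, Sat.R x y → Sat.R (g x) (g y))
    (hh : ∀ ⦃x y⦄, Sat.R x y → Sat.R (h x) (h y))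
    (hgh : ∀ x, Sat.R (g (f x)) (h x)) (μ : Measure X) :
    (μ.map f).map g = μ.map h := by
  rw [Measure.map_map (measurable_of_sat hg) (measurable_of_sat hf)]
  exact map_sat_congr (fun _ _ hxy => hg (hf hxy)) hh hgh μ

lemma dirac_sat_congr {X : Type*} [MeasurableSpace X] [Sat X] {x y : X} (h : Sat.R x y) :
    Measure.dirac x = Measure.dirac y := by
  ext S hS
  rw [Measure.dirac_apply' _ hS, Measure.dirac_apply' _ hS]
  by_cases hx : x ∈ S
  · rw [Set.indicator_of_mem hx, Set.indicator_of_mem (Sat.sat hS h hx)]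
    rfl
  · rw [Set.indicator_of_notMem hx,
      Set.indicator_of_notMem (fun hy => hx (Sat.sat hS (Sat.symm h) hy))]

lemma mcls_congr {σ τ : Membrane} (h : MCong σ τ) : mcls σ = mcls τ := by
  ext ρ
  exact ⟨fun hx => h.symm.trans hx, fun hx => h.trans hx⟩

end Brane

namespace Brane

/-! #### Membrane-level lemmas -/

lemma MCong.rot (x σ ρ : Membrane) : MCong ((x.par ρ).par σ) ((x.par σ).par ρ) :=
  ((MCong.parAssoc x ρ σ).symm.trans (MCong.par_right x (MCong.parComm ρ σ))).trans
    (MCong.parAssoc x σ ρ)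

lemma measurable_parR (τ : Membrane) : Measurable fun x : Membrane => x.par τ :=
  measurable_of_sat fun _ _ h => MCong.par τ h

lemma measurable_parRF (τ : Membrane) :
    Measurable fun p : Membrane × Membrane => (p.1.par τ, p.2) := by
  refine measurable_of_sat ?_
  rintro x y ⟨h1, h2⟩
  exact ⟨MCong.par τ h1, h2⟩

lemma map_par_congr (κ : Measure Membrane) {a b : Membrane} (h : MCong a b) :
    κ.map (fun x => x.par a) = κ.map (fun x => x.par b) :=
  map_sat_congr (fun _ _ h' => MCong.par a h') (fun _ _ h' => MCong.par b h')
    (fun x => MCong.par_right x h) κ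

lemma map_parF_congr (κ : Measure (Membrane × Membrane)) {a b : Membrane} (h : MCong a b) :
    κ.map (fun p : Membrane × Membrane => (p.1.par a, p.2))
      = κ.map (fun p : Membrane × Membrane => (p.1.par b, p.2)) := by
  refine map_sat_congr ?_ ?_ ?_ κ
  · rintro x y ⟨h1, h2⟩; exact ⟨MCong.par a h1, h2⟩
  · rintro x y ⟨h1, h2⟩; exact ⟨MCong.par b h1, h2⟩
  · exact fun p => ⟨MCong.par_right p.1 h, MCong.refl p.2⟩

lemma map_par_par (κ : Measure Membrane) (a b : Membrane) :
    (κ.map (fun x => x.par a)).map (fun x => x.par b)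
      = κ.map (fun x => x.par (a.par b)) := by
  refine map_map_congr ?_ ?_ ?_ ?_ κ
  · exact fun _ _ h => MCong.par a h
  · exact fun _ _ h => MCong.par b h
  · exact fun _ _ h => MCong.par (a.par b) h
  · exact fun x => (MCong.parAssoc x a b).symm

lemma map_parF_parF (κ : Measure (Membrane × Membrane)) (a b : Membrane) :
    (κ.map (fun p : Membrane × Membrane => (p.1.par a, p.2))).map
        (fun p : Membrane × Membrane => (p.1.par b, p.2))
      = κ.map (fun p : Membrane × Membrane => (p.1.par (a.par b), p.2)) := by
  refine map_map_congr ?_ ?_ ?_ ?_ κ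
  · rintro x y ⟨h1, h2⟩; exact ⟨MCong.par a h1, h2⟩
  · rintro x y ⟨h1, h2⟩; exact ⟨MCong.par b h1, h2⟩
  · rintro x y ⟨h1, h2⟩; exact ⟨MCong.par (a.par b) h1, h2⟩
  · exact fun p => ⟨(MCong.parAssoc p.1 a b).symm, MCong.refl p.2⟩

lemma mpar_comm (μ μ' : MMeas) (σ τ : Membrane) : mpar μ μ' σ τ = mpar μ' μ τ σ := by
  funext a
  cases a <;> exact add_comm _ _

lemma mpar_zero (μ : MMeas) (σ : Membrane) : mpar μ 0 σ .zero = μ := by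
  funext a
  cases a <;>
    simp only [mpar, Pi.zero_apply, Measure.map_zero, add_zero] <;>
    (try erw [Measure.map_zero, add_zero]) <;>
    (conv_rhs => rw [← Measure.map_id (μ := μ _)]) <;>
    first
      | exact map_sat_congr (fun _ _ h => MCong.par _ h) (fun _ _ h => h)
          (fun x => MCong.parZero x) _
      | (refine map_sat_congr ?_ (fun _ _ h => h) ?_ _
         · rintro x y ⟨h1, h2⟩; exact ⟨MCong.par _ h1, h2⟩
         · exact fun x => ⟨MCong.parZero x.1, MCong.refl x.2⟩)

lemma mpar_congr_left (μ μ' : MMeas) {σ τ : Membrane} (ρ : Membrane) (h : MCong σ τ) :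
    mpar μ μ' σ ρ = mpar μ μ' τ ρ := by
  funext a
  cases a <;> simp only [mpar] <;> congr 1 <;>
    first
      | exact map_par_congr _ h
      | exact map_parF_congr _ h

lemma mpar_assoc_aux1 (κ₁ κ₂ κ₃ : Measure Membrane) (σ τ ρ : Membrane) :
    (κ₁.map (fun x => x.par τ) + κ₂.map (fun x => x.par σ)).map (fun x => x.par ρ)
        + κ₃.map (fun x => x.par (σ.par τ))
      = κ₁.map (fun x => x.par (τ.par ρ))
        + ((κ₂.map (fun x => x.par ρ) + κ₃.map (fun x => x.par τ)).map (fun x => x.par σ)) := by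
  rw [Measure.map_add _ _ (measurable_parR ρ), Measure.map_add _ _ (measurable_parR σ),
    map_par_par, map_par_par, map_par_par, map_par_par,
    map_par_congr _ (MCong.parComm ρ σ), map_par_congr _ (MCong.parComm τ σ), add_assoc]

lemma mpar_assoc_aux2 (κ₁ κ₂ κ₃ : Measure (Membrane × Membrane)) (σ τ ρ : Membrane) :
    (κ₁.map (fun p : Membrane × Membrane => (p.1.par τ, p.2))
          + κ₂.map (fun p : Membrane × Membrane => (p.1.par σ, p.2))).map
        (fun p : Membrane × Membrane => (p.1.par ρ, p.2))
        + κ₃.map (fun p : Membrane × Membrane => (p.1.par (σ.par τ), p.2))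
      = κ₁.map (fun p : Membrane × Membrane => (p.1.par (τ.par ρ), p.2))
        + ((κ₂.map (fun p : Membrane × Membrane => (p.1.par ρ, p.2))
              + κ₃.map (fun p : Membrane × Membrane => (p.1.par τ, p.2))).map
            (fun p : Membrane × Membrane => (p.1.par σ, p.2))) := by
  rw [Measure.map_add _ _ (measurable_parRF ρ), Measure.map_add _ _ (measurable_parRF σ),
    map_parF_parF, map_parF_parF, map_parF_parF, map_parF_parF,
    map_parF_congr _ (MCong.parComm ρ σ), map_parF_congr _ (MCong.parComm τ σ), add_assoc]

lemma mpar_assoc (μ₁ μ₂ μ₃ : MMeas) (σ τ ρ : Membrane) :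
    mpar (mpar μ₁ μ₂ σ τ) μ₃ (σ.par τ) ρ = mpar μ₁ (mpar μ₂ μ₃ τ ρ) σ (τ.par ρ) := by
  funext a
  cases a <;>
    first
      | exact mpar_assoc_aux1 _ _ _ σ τ ρ
      | exact mpar_assoc_aux2 _ _ _ σ τ ρ

lemma phagoMeas_congr (ι : Name → ℝ≥0∞) (n : Name) {σ τ : Membrane} (h : MCong σ τ) :
    phagoMeas ι n σ = phagoMeas ι n τ := by
  funext a
  cases a <;> simp only [phagoMeas] <;>
    first
      | rfl
      | rw [dirac_sat_congr (show Sat.R σ τ from h)]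

lemma exoMeas_congr (ι : Name → ℝ≥0∞) (n : Name) {σ τ : Membrane} (h : MCong σ τ) :
    exoMeas ι n σ = exoMeas ι n τ := by
  funext a
  cases a <;> simp only [exoMeas] <;>
    first
      | rfl
      | rw [dirac_sat_congr (show Sat.R σ τ from h)]

lemma coexoMeas_congr (ι : Name → ℝ≥0∞) (n : Name) {σ τ : Membrane} (h : MCong σ τ) :
    coexoMeas ι n σ = coexoMeas ι n τ := by
  funext a
  cases a <;> simp only [coexoMeas] <;>
    first
      | rfl
      | rw [dirac_sat_congr (show Sat.R σ τ from h)]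

lemma cophagoMeas_congr (ι : Name → ℝ≥0∞) (n : Name) {ρ ν σ τ : Membrane}
    (h₁ : MCong ρ ν) (h₂ : MCong σ τ) : cophagoMeas ι n ρ σ = cophagoMeas ι n ν τ := by
  funext a
  cases a <;> simp only [cophagoMeas] <;>
    first
      | rfl
      | rw [dirac_sat_congr (show Sat.R ((σ, ρ) : Membrane × Membrane) (τ, ν) from ⟨h₂, h₁⟩)]

lemma pinoMeas_congr (ι : Name → ℝ≥0∞) (n : Name) {ρ ν σ τ : Membrane}
    (h₁ : MCong ρ ν) (h₂ : MCong σ τ) : pinoMeas ι n ρ σ = pinoMeas ι n ν τ := by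
  funext a
  cases a <;> simp only [pinoMeas] <;>
    first
      | rfl
      | rw [dirac_sat_congr (show Sat.R ((σ, ρ) : Membrane × Membrane) (τ, ν) from ⟨h₂, h₁⟩)]

theorem mtrans_iff {ι : Name → ℝ≥0∞} {σ τ : Membrane} (h : MCong σ τ) :
    ∀ μ : MMeas, MTrans ι σ μ ↔ MTrans ι τ μ := by
  induction h with
  | refl σ => exact fun μ => Iff.rfl
  | symm _ ih => exact fun μ => (ih μ).symm
  | trans _ _ ih₁ ih₂ => exact fun μ => (ih₁ μ).trans (ih₂ μ)
  | parComm σ τ =>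
      intro μ
      constructor
      · intro ht
        cases ht with
        | par h1 h2 =>
            have := MTrans.par h2 h1
            rwa [mpar_comm] at this
      · intro ht
        cases ht with
        | par h1 h2 =>
            have := MTrans.par h2 h1
            rwa [mpar_comm] at this
  | parAssoc σ τ ρ =>
      intro μ
      constructor
      · intro ht
        cases ht with
        | par h1 h23 =>
            cases h23 with
            | par h2 h3 =>
                have := MTrans.par (MTrans.par h1 h2) h3
                rwa [mpar_assoc] at this
      · intro ht
        cases ht with
        | par h12 h3 =>
            cases h12 with
            | par h1 h2 =>
                have := MTrans.par h1 (MTrans.par h2 h3)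
                rwa [← mpar_assoc] at this
  | parZero σ =>
      intro μ
      constructor
      · intro ht
        cases ht with
        | par h1 h2 =>
            cases h2
            rw [mpar_zero]
            exact h1
      · intro ht
        have := MTrans.par ht MTrans.zero
        rwa [mpar_zero] at this
  | par ρ h ih =>
      intro μ
      constructor
      · intro ht
        cases ht with
        | par h1 h2 =>
            have := MTrans.par ((ih _).mp h1) h2
            rwa [mpar_congr_left _ _ _ h.symm] at this
      · intro ht
        cases ht with
        | par h1 h2 =>
            have := MTrans.par ((ih _).mpr h1) h2
            rwa [mpar_congr_left _ _ _ h] at this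
  | phago n h ih =>
      intro μ
      constructor
      · intro ht
        cases ht
        rw [phagoMeas_congr _ _ h]
        exact MTrans.phago
      · intro ht
        cases ht
        rw [phagoMeas_congr _ _ h.symm]
        exact MTrans.phago
  | exo n h ih =>
      intro μ
      constructor
      · intro ht
        cases ht
        rw [exoMeas_congr _ _ h]
        exact MTrans.exo
      · intro ht
        cases ht
        rw [exoMeas_congr _ _ h.symm]
        exact MTrans.exo
  | coexo n h ih =>
      intro μ
      constructor
      · intro ht
        cases ht
        rw [coexoMeas_congr _ _ h]
        exact MTrans.coexo
      · intro ht
        cases ht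
        rw [coexoMeas_congr _ _ h.symm]
        exact MTrans.coexo
  | cophago n h₁ h₂ ih₁ ih₂ =>
      intro μ
      constructor
      · intro ht
        cases ht
        rw [cophagoMeas_congr _ _ h₁ h₂]
        exact MTrans.cophago
      · intro ht
        cases ht
        rw [cophagoMeas_congr _ _ h₁.symm h₂.symm]
        exact MTrans.cophago
  | pino n h₁ h₂ ih₁ ih₂ =>
      intro μ
      constructor
      · intro ht
        cases ht
        rw [pinoMeas_congr _ _ h₁ h₂]
        exact MTrans.pino
      · intro ht
        cases ht
        rw [pinoMeas_congr _ _ h₁.symm h₂.symm]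
        exact MTrans.pino

end Brane

namespace Brane

/-! #### S-finiteness of transition measures -/

lemma MTrans.sfinite {ι : Name → ℝ≥0∞} {σ : Membrane} {μ : MMeas} (h : MTrans ι σ μ) :
    ∀ a, SFinite (μ a) := by
  induction h with
  | zero => intro a; rw [Pi.zero_apply]; infer_instance
  | phago => intro a; cases a <;> simp only [phagoMeas] <;> (try split) <;> infer_instance
  | exo => intro a; cases a <;> simp only [exoMeas] <;> (try split) <;> infer_instance
  | coexo => intro a; cases a <;> simp only [coexoMeas] <;> (try split) <;> infer_instance
  | cophago => intro a; cases a <;> simp only [cophagoMeas] <;> (try split) <;> infer_instance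
  | pino => intro a; cases a <;> simp only [pinoMeas] <;> (try split) <;> infer_instance
  | @par σ' τ' μ' μ'' h1 h2 ih1 ih2 =>
      intro a
      haveI := ih1; haveI := ih2
      haveI i1 : ∀ n : Name, @SFinite Membrane _ (μ' (.phago n)) := fun n => ih1 _
      haveI i2 : ∀ n : Name, @SFinite Membrane _ (μ' (.exo n)) := fun n => ih1 _
      haveI i3 : ∀ n : Name, @SFinite Membrane _ (μ' (.coexo n)) := fun n => ih1 _
      haveI i4 : ∀ n : Name, @SFinite (Membrane × Membrane) _ (μ' (.cophago n)) :=
        fun n => ih1 _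
      haveI i5 : ∀ n : Name, @SFinite (Membrane × Membrane) _ (μ' (.pino n)) := fun n => ih1 _
      haveI j1 : ∀ n : Name, @SFinite Membrane _ (μ'' (.phago n)) := fun n => ih2 _
      haveI j2 : ∀ n : Name, @SFinite Membrane _ (μ'' (.exo n)) := fun n => ih2 _
      haveI j3 : ∀ n : Name, @SFinite Membrane _ (μ'' (.coexo n)) := fun n => ih2 _
      haveI j4 : ∀ n : Name, @SFinite (Membrane × Membrane) _ (μ'' (.cophago n)) :=
        fun n => ih2 _
      haveI j5 : ∀ n : Name, @SFinite (Membrane × Membrane) _ (μ'' (.pino n)) := fun n => ih2 _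
      cases a <;> simp only [mpar] <;> exact instSFiniteOfCountable

lemma STrans.sfinite {ι : Name → ℝ≥0∞} {P : System} {μ : SMeas} (h : STrans ι P μ) :
    ∀ a, SFinite (μ a) := by
  induction h with
  | void => intro a; rw [Pi.zero_apply]; infer_instance
  | @cell σ' P' ν' μ' hm hP ih =>
      intro a
      haveI := MTrans.sfinite hm; haveI := ih
      haveI i1 : ∀ n : Name, @SFinite (Membrane × Membrane) _ (ν' (.cophago n)) :=
        fun n => MTrans.sfinite hm _
      haveI i2 : ∀ n : Name, @SFinite Membrane _ (ν' (.exo n)) := fun n => MTrans.sfinite hm _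
      haveI i3 : ∀ n : Name, @SFinite Membrane _ (ν' (.coexo n)) := fun n => MTrans.sfinite hm _
      haveI i4 : ∀ n : Name, @SFinite (Membrane × Membrane) _ (ν' (.pino n)) :=
        fun n => MTrans.sfinite hm _
      haveI j1 : @SFinite System _ (μ' .id) := ih _
      haveI j2 : ∀ n : Name, @SFinite (Membrane × System × System) _ (μ' (.ex n)) :=
        fun n => ih _
      cases a with
      | ex n =>
          exact inferInstanceAs
            (SFinite ((ν' (.exo n)).prod (Measure.dirac (P', System.void))))
      | ph n => simp only [mnest]; exact instSFiniteOfCountable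
      | phB n => simp only [mnest]; exact instSFiniteOfCountable
      | id => simp only [mnest]; exact instSFiniteOfCountable
  | @comp P' Q' μ' μ'' h1 h2 ih1 ih2 =>
      intro a
      haveI := ih1; haveI := ih2
      haveI i1 : @SFinite System _ (μ' .id) := ih1 _
      haveI i2 : ∀ n : Name, @SFinite (System × System) _ (μ' (.ph n)) := fun n => ih1 _
      haveI i3 : ∀ n : Name, @SFinite (Membrane × Membrane × System × System) _ (μ' (.phB n)) :=
        fun n => ih1 _
      haveI i4 : ∀ n : Name, @SFinite (Membrane × System × System) _ (μ' (.ex n)) :=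
        fun n => ih1 _
      haveI j1 : @SFinite System _ (μ'' .id) := ih2 _
      haveI j2 : ∀ n : Name, @SFinite (System × System) _ (μ'' (.ph n)) := fun n => ih2 _
      haveI j3 : ∀ n : Name, @SFinite (Membrane × Membrane × System × System) _ (μ'' (.phB n)) :=
        fun n => ih2 _
      haveI j4 : ∀ n : Name, @SFinite (Membrane × System × System) _ (μ'' (.ex n)) :=
        fun n => ih2 _
      cases a <;> simp only [mcomp] <;> exact instSFiniteOfCountable

/-! #### Congruence-preservation helpers for systems -/

lemma SCong.rot (x σ ρ : System) : SCong ((x.comp ρ).comp σ) ((x.comp σ).comp ρ) :=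
  ((SCong.compAssoc x ρ σ).symm.trans (SCong.comp_right x (SCong.compComm ρ σ))).trans
    (SCong.compAssoc x σ ρ)

lemma presC1 (X : System) : ∀ ⦃p q : System⦄, Sat.R p q → Sat.R (p.comp X) (q.comp X) :=
  fun _ _ h => SCong.comp X h

lemma presCell (σ : Membrane) :
    ∀ ⦃p q : System⦄, Sat.R p q → Sat.R (System.cell σ p) (System.cell σ q) :=
  fun _ _ h => SCong.cell (MCong.refl σ) h

lemma presC2 (X : System) : ∀ ⦃p q : System × System⦄, Sat.R p q →
    Sat.R (p.1, p.2.comp X) (q.1, q.2.comp X) := by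
  rintro p q ⟨h1, h2⟩; exact ⟨h1, SCong.comp X h2⟩

lemma presC4 (X : System) : ∀ ⦃p q : Membrane × Membrane × System × System⦄, Sat.R p q →
    Sat.R (p.1, p.2.1, p.2.2.1, p.2.2.2.comp X) (q.1, q.2.1, q.2.2.1, q.2.2.2.comp X) := by
  rintro p q ⟨h1, h2, h3, h4⟩; exact ⟨h1, h2, h3, SCong.comp X h4⟩

lemma presC3 (X : System) : ∀ ⦃p q : Membrane × System × System⦄, Sat.R p q →
    Sat.R (p.1, p.2.1, p.2.2.comp X) (q.1, q.2.1, q.2.2.comp X) := by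
  rintro p q ⟨h1, h2, h3⟩; exact ⟨h1, h2, SCong.comp X h3⟩

lemma presPino (P : System) : ∀ ⦃p q : Membrane × Membrane⦄, Sat.R p q →
    Sat.R (System.cell p.1 ((System.cell p.2 System.void).comp P))
          (System.cell q.1 ((System.cell q.2 System.void).comp P)) := by
  rintro p q ⟨h1, h2⟩
  exact SCong.cell h1 (SCong.comp P (SCong.cell h2 (SCong.refl _)))

lemma presExoF : ∀ ⦃p q : (Membrane × System × System) × Membrane⦄, Sat.R p q →
    Sat.R ((System.cell (p.1.1.par p.2) p.1.2.2).comp p.1.2.1)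
          ((System.cell (q.1.1.par q.2) q.1.2.2).comp q.1.2.1) := by
  rintro p q ⟨⟨h1, h2, h3⟩, h4⟩
  exact SCong.comp₂ (SCong.cell (MCong.par₂ h1 h4) h3) h2

lemma presF : ∀ ⦃p q : (System × System) × (Membrane × Membrane × System × System)⦄, Sat.R p q →
    Sat.R ((System.cell p.2.1 ((System.cell p.2.2.1 p.1.1).comp p.2.2.2.1)).comp
            (p.1.2.comp p.2.2.2.2))
          ((System.cell q.2.1 ((System.cell q.2.2.1 q.1.1).comp q.2.2.2.1)).comp
            (q.1.2.comp q.2.2.2.2)) := by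
  rintro p q ⟨⟨h1, h2⟩, h3, h4, h5, h6⟩
  exact SCong.comp₂ (SCong.cell h3 (SCong.comp₂ (SCong.cell h4 h1) h5)) (SCong.comp₂ h2 h6)

lemma presG : ∀ ⦃p q : (Membrane × Membrane × System × System) × (System × System)⦄, Sat.R p q →
    Sat.R ((System.cell p.1.1 ((System.cell p.1.2.1 p.2.1).comp p.1.2.2.1)).comp
            (p.1.2.2.2.comp p.2.2))
          ((System.cell q.1.1 ((System.cell q.1.2.1 q.2.1).comp q.1.2.2.1)).comp
            (q.1.2.2.2.comp q.2.2)) := by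
  rintro p q ⟨⟨h1, h2, h3, h4⟩, h5, h6⟩
  exact SCong.comp₂ (SCong.cell h1 (SCong.comp₂ (SCong.cell h2 h5) h3)) (SCong.comp₂ h4 h6)

/-! #### mnest congruence and zero lemmas -/

lemma scls_congr {P Q : System} (h : SCong P Q) : scls P = scls Q := by
  ext R
  exact ⟨fun hx => h.symm.trans hx, fun hx => h.trans hx⟩

lemma mnest_ph_aux {σ τ : Membrane} {P Q : System} (hm : MCong σ τ) (hs : SCong P Q)
    (κ : Measure Membrane) :
    κ (mcls σ) • Measure.dirac ((System.cell σ P, System.void) : System × System)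
      = κ (mcls τ) • Measure.dirac ((System.cell τ Q, System.void) : System × System) := by
  rw [mcls_congr hm,
    dirac_sat_congr (show Sat.R ((System.cell σ P, System.void) : System × System)
      (System.cell τ Q, System.void) from ⟨SCong.cell hm hs, SCong.refl _⟩)]

lemma dirac_pair_congr {P Q : System} (hs : SCong P Q) :
    Measure.dirac ((P, System.void) : System × System)
      = Measure.dirac ((Q, System.void) : System × System) :=
  dirac_sat_congr (show Sat.R ((P, System.void) : System × System) (Q, System.void) from
    ⟨hs, SCong.refl _⟩)

lemma mnest_id_aux (ι : Name → ℝ≥0∞) {σ τ : Membrane} {P Q : System}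
    (hm : MCong σ τ) (hs : SCong P Q) (κ : Measure System)
    (κp : Name → Measure (Membrane × Membrane))
    (κe : Name → Measure (Membrane × System × System))
    (κc : Name → Measure Membrane) :
    κ.map (fun R => System.cell σ R) +
      Measure.sum (fun n : Name => (κp n).map (fun p : Membrane × Membrane =>
        System.cell p.1 ((System.cell p.2 System.void).comp P))) +
      Measure.sum (fun n : Name => (ι n)⁻¹ •
        (((κe n).prod (κc n)).map (fun q : (Membrane × System × System) × Membrane =>
          (System.cell (q.1.1.par q.2) q.1.2.2).comp q.1.2.1)))
    = κ.map (fun R => System.cell τ R) +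
      Measure.sum (fun n : Name => (κp n).map (fun p : Membrane × Membrane =>
        System.cell p.1 ((System.cell p.2 System.void).comp Q))) +
      Measure.sum (fun n : Name => (ι n)⁻¹ •
        (((κe n).prod (κc n)).map (fun q : (Membrane × System × System) × Membrane =>
          (System.cell (q.1.1.par q.2) q.1.2.2).comp q.1.2.1))) := by
  congr 1
  congr 1
  · exact map_sat_congr (presCell σ) (presCell τ) (fun x => SCong.cell hm (SCong.refl x)) κ
  · congr 1
    funext n
    refine map_sat_congr (presPino P) (presPino Q) ?_ (κp n)
    intro p
    exact SCong.cell (MCong.refl _) (SCong.comp_right _ hs)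

lemma mnest_phB_aux {P Q : System} (hs : SCong P Q) (κ : Measure (Membrane × Membrane)) :
    (κ.prod (Measure.dirac ((P, System.void) : System × System))).map
        MeasurableEquiv.prodAssoc
      = (κ.prod (Measure.dirac ((Q, System.void) : System × System))).map
        MeasurableEquiv.prodAssoc := by
  rw [dirac_pair_congr hs]

lemma mnest_ex_aux {P Q : System} (hs : SCong P Q) (κ : Measure Membrane) :
    κ.prod (Measure.dirac ((P, System.void) : System × System))
      = κ.prod (Measure.dirac ((Q, System.void) : System × System)) := by
  rw [dirac_pair_congr hs]

lemma mnest_congr (ι : Name → ℝ≥0∞) (μ : SMeas) (ν : MMeas) {σ τ : Membrane} {P Q : System}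
    (hm : MCong σ τ) (hs : SCong P Q) : mnest ι μ ν σ P = mnest ι μ ν τ Q := by
  funext a
  cases a with
  | ph n => exact mnest_ph_aux hm hs (ν (.phago n))
  | phB n => exact mnest_phB_aux hs (ν (.cophago n))
  | ex n => exact mnest_ex_aux hs (ν (.exo n))
  | id =>
      exact mnest_id_aux ι hm hs (μ .id) (fun n => ν (.pino n)) (fun n => μ (.ex n))
        (fun n => ν (.coexo n))

lemma mnest_zero (ι : Name → ℝ≥0∞) : mnest ι 0 0 .zero .void = 0 := by
  funext a
  cases a <;>
    simp only [mnest, Pi.zero_apply, Measure.coe_zero, Measure.map_zero, Measure.zero_prod,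
      Measure.prod_zero, smul_zero, zero_smul, Measure.sum_zero, add_zero, zero_add]
  case id =>
    show Measure.map (fun Q => System.cell Membrane.zero Q) (0 : Measure System) +
        Measure.sum (fun _ : Name => Measure.map
          (fun p : Membrane × Membrane => System.cell p.1 ((System.cell p.2 System.void).comp
            System.void)) (0 : Measure (Membrane × Membrane))) +
        Measure.sum (fun n => (ι n)⁻¹ • Measure.map
          (fun q : (Membrane × System × System) × Membrane =>
            (System.cell (q.1.1.par q.2) q.1.2.2).comp q.1.2.1) 0) = 0
    simp
  case ph =>
    show (0 : ℝ≥0∞) • Measure.dirac ((System.cell Membrane.zero System.void, System.void) :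
      System × System) = 0
    exact zero_smul _ _
  case phB => erw [Measure.map_zero]
  case ex => rfl

/-! #### mcomp: unit -/

lemma map_c2_void (κ : Measure (System × System)) :
    κ.map (fun p : System × System => (p.1, p.2.comp System.void)) = κ :=
  (map_sat_congr (presC2 System.void) (fun _ _ h => h)
    (fun p => ⟨SCong.refl _, SCong.compVoid _⟩) κ).trans Measure.map_id

lemma mcomp_void_ph (P : System) (κ : Measure (System × System)) :
    κ.map (fun p : System × System => (p.1, p.2.comp System.void))
      + (0 : Measure (System × System)).map (fun p : System × System => (p.1, p.2.comp P))
      = κ := by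
  rw [Measure.map_zero, add_zero]
  exact map_c2_void _

lemma mcomp_void_phB (P : System) (κ : Measure (Membrane × Membrane × System × System)) :
    κ.map (fun p : Membrane × Membrane × System × System =>
        (p.1, p.2.1, p.2.2.1, p.2.2.2.comp System.void))
      + (0 : Measure (Membrane × Membrane × System × System)).map
          (fun p : Membrane × Membrane × System × System =>
            (p.1, p.2.1, p.2.2.1, p.2.2.2.comp P))
      = κ := by
  rw [Measure.map_zero, add_zero]
  refine (map_sat_congr (presC4 System.void) (fun _ _ h => h) ?_ κ).trans Measure.map_id
  rintro ⟨a, b, c, d⟩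
  exact ⟨MCong.refl _, MCong.refl _, SCong.refl _, SCong.compVoid _⟩

lemma mcomp_void_ex (P : System) (κ : Measure (Membrane × System × System)) :
    κ.map (fun p : Membrane × System × System => (p.1, p.2.1, p.2.2.comp System.void))
      + (0 : Measure (Membrane × System × System)).map
          (fun p : Membrane × System × System => (p.1, p.2.1, p.2.2.comp P))
      = κ := by
  rw [Measure.map_zero, add_zero]
  refine (map_sat_congr (presC3 System.void) (fun _ _ h => h) ?_ κ).trans Measure.map_id
  rintro ⟨a, b, c⟩
  exact ⟨MCong.refl _, SCong.refl _, SCong.compVoid _⟩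

lemma mcomp_void_id (ι : Name → ℝ≥0∞) (P : System) (κ : Measure System)
    (κph : Name → Measure (System × System))
    (κphB : Name → Measure (Membrane × Membrane × System × System)) :
    κ.map (fun R => R.comp System.void)
      + (0 : Measure System).map (fun R => R.comp P)
      + Measure.sum (fun n : Name => (ι n)⁻¹ •
          (((κph n).prod (0 : Measure (Membrane × Membrane × System × System))).map
            (fun q : (System × System) × (Membrane × Membrane × System × System) =>
              (System.cell q.2.1 ((System.cell q.2.2.1 q.1.1).comp q.2.2.2.1)).comp
                (q.1.2.comp q.2.2.2.2))))
      + Measure.sum (fun n : Name => (ι n)⁻¹ •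
          (((κphB n).prod (0 : Measure (System × System))).map
            (fun q : (Membrane × Membrane × System × System) × (System × System) =>
              (System.cell q.1.1 ((System.cell q.1.2.1 q.2.1).comp q.1.2.2.1)).comp
                (q.1.2.2.2.comp q.2.2))))
      = κ := by
  rw [Measure.map_zero, add_zero]
  simp only [Measure.prod_zero, Measure.map_zero, smul_zero, Measure.sum_zero, add_zero]
  exact (map_sat_congr (presC1 System.void) (fun _ _ h => h)
    (fun x => SCong.compVoid x) κ).trans Measure.map_id

lemma mcomp_void (ι : Name → ℝ≥0∞) (μ : SMeas) (P : System) :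
    mcomp ι μ 0 P .void = μ := by
  funext a
  cases a with
  | ph n => exact mcomp_void_ph P (μ (.ph n))
  | phB n => exact mcomp_void_phB P (μ (.phB n))
  | ex n => exact mcomp_void_ex P (μ (.ex n))
  | id => exact mcomp_void_id ι P (μ .id) (fun n => μ (.ph n)) (fun n => μ (.phB n))

end Brane

namespace Brane

/-! #### Measure combinators -/

lemma msum_add (f g : Name → Measure System) :
    Measure.sum (fun n => f n + g n) = Measure.sum f + Measure.sum g :=
  (Measure.sum_add_sum f g).symm

lemma map_isum {α β : Type*} [MeasurableSpace α] [MeasurableSpace β]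
    (κ : Name → Measure α) {f : α → β} (hf : Measurable f) (w : Name → ℝ≥0∞) :
    (Measure.sum (fun n => w n • κ n)).map f = Measure.sum (fun n => w n • (κ n).map f) := by
  rw [Measure.map_sum hf.aemeasurable]
  simp only [Measure.map_smul]

lemma my_prod_map_r {α β γ : Type*} [MeasurableSpace α] [MeasurableSpace β] [MeasurableSpace γ]
    (μ : Measure α) (ν : Measure β) [SFinite μ] [SFinite ν] {g : β → γ} (hg : Measurable g) :
    μ.prod (ν.map g) = (μ.prod ν).map (Prod.map id g) := by
  conv_lhs => rw [← Measure.map_id (μ := μ)]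
  rw [Measure.map_prod_map _ _ measurable_id hg]

lemma my_prod_map_l {α β γ : Type*} [MeasurableSpace α] [MeasurableSpace β] [MeasurableSpace γ]
    (μ : Measure α) (ν : Measure β) [SFinite μ] [SFinite ν] {g : α → γ} (hg : Measurable g) :
    (μ.map g).prod ν = (μ.prod ν).map (Prod.map g id) := by
  conv_lhs => rw [← Measure.map_id (μ := ν)]
  rw [Measure.map_prod_map _ _ hg measurable_id]

/-! #### The key phago-interaction commutation lemma -/

lemma prod_FG (κ1 : Measure (System × System))
    (κ2 : Measure (Membrane × Membrane × System × System)) [SFinite κ1] [SFinite κ2] :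
    (κ1.prod κ2).map
        (fun q : (System × System) × (Membrane × Membrane × System × System) =>
          (System.cell q.2.1 ((System.cell q.2.2.1 q.1.1).comp q.2.2.2.1)).comp
            (q.1.2.comp q.2.2.2.2))
      = (κ2.prod κ1).map
        (fun q : (Membrane × Membrane × System × System) × (System × System) =>
          (System.cell q.1.1 ((System.cell q.1.2.1 q.2.1).comp q.1.2.2.1)).comp
            (q.1.2.2.2.comp q.2.2)) := by
  conv_rhs => rw [← Measure.prod_swap]
  rw [Measure.map_map (measurable_of_sat presG) measurable_swap]
  refine map_sat_congr presF ?_ ?_ _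
  · intro x y h
    exact presG ⟨h.2, h.1⟩
  · intro q
    exact SCong.comp₂ (SCong.refl _) (SCong.compComm _ _)

/-! #### Commutativity of ⊗ -/

lemma mcomp_id_comm_aux (ι : Name → ℝ≥0∞) (P Q : System) (a b : Measure System)
    (p p' : Name → Measure (System × System))
    (B B' : Name → Measure (Membrane × Membrane × System × System))
    (hp : ∀ n, SFinite (p n)) (hp' : ∀ n, SFinite (p' n))
    (hB : ∀ n, SFinite (B n)) (hB' : ∀ n, SFinite (B' n)) :
    a.map (fun R => R.comp Q) + b.map (fun R => R.comp P)
      + Measure.sum (fun n : Name => (ι n)⁻¹ • (((p n).prod (B' n)).map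
          (fun q : (System × System) × (Membrane × Membrane × System × System) =>
            (System.cell q.2.1 ((System.cell q.2.2.1 q.1.1).comp q.2.2.2.1)).comp
              (q.1.2.comp q.2.2.2.2))))
      + Measure.sum (fun n : Name => (ι n)⁻¹ • (((B n).prod (p' n)).map
          (fun q : (Membrane × Membrane × System × System) × (System × System) =>
            (System.cell q.1.1 ((System.cell q.1.2.1 q.2.1).comp q.1.2.2.1)).comp
              (q.1.2.2.2.comp q.2.2))))
    = b.map (fun R => R.comp P) + a.map (fun R => R.comp Q)
      + Measure.sum (fun n : Name => (ι n)⁻¹ • (((p' n).prod (B n)).map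
          (fun q : (System × System) × (Membrane × Membrane × System × System) =>
            (System.cell q.2.1 ((System.cell q.2.2.1 q.1.1).comp q.2.2.2.1)).comp
              (q.1.2.comp q.2.2.2.2))))
      + Measure.sum (fun n : Name => (ι n)⁻¹ • (((B' n).prod (p n)).map
          (fun q : (Membrane × Membrane × System × System) × (System × System) =>
            (System.cell q.1.1 ((System.cell q.1.2.1 q.2.1).comp q.1.2.2.1)).comp
              (q.1.2.2.2.comp q.2.2)))) := by
  haveI := hp; haveI := hp'; haveI := hB; haveI := hB'
  have e1 : ∀ n : Name, ((p' n).prod (B n)).map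
        (fun q : (System × System) × (Membrane × Membrane × System × System) =>
          (System.cell q.2.1 ((System.cell q.2.2.1 q.1.1).comp q.2.2.2.1)).comp
            (q.1.2.comp q.2.2.2.2))
      = ((B n).prod (p' n)).map
        (fun q : (Membrane × Membrane × System × System) × (System × System) =>
          (System.cell q.1.1 ((System.cell q.1.2.1 q.2.1).comp q.1.2.2.1)).comp
            (q.1.2.2.2.comp q.2.2)) := fun n => prod_FG _ _
  have e2 : ∀ n : Name, ((B' n).prod (p n)).map
        (fun q : (Membrane × Membrane × System × System) × (System × System) =>
          (System.cell q.1.1 ((System.cell q.1.2.1 q.2.1).comp q.1.2.2.1)).comp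
            (q.1.2.2.2.comp q.2.2))
      = ((p n).prod (B' n)).map
        (fun q : (System × System) × (Membrane × Membrane × System × System) =>
          (System.cell q.2.1 ((System.cell q.2.2.1 q.1.1).comp q.2.2.2.1)).comp
            (q.1.2.comp q.2.2.2.2)) := fun n => (prod_FG _ _).symm
  simp only [e1, e2]
  abel

lemma mcomp_comm (ι : Name → ℝ≥0∞) (μ μ' : SMeas) (P Q : System)
    (h : ∀ a, SFinite (μ a)) (h' : ∀ a, SFinite (μ' a)) :
    mcomp ι μ μ' P Q = mcomp ι μ' μ Q P := by
  funext a
  cases a with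
  | ph n => exact add_comm _ _
  | phB n => exact add_comm _ _
  | ex n => exact add_comm _ _
  | id =>
      exact mcomp_id_comm_aux ι P Q (μ .id) (μ' .id) (fun n => μ (.ph n)) (fun n => μ' (.ph n))
        (fun n => μ (.phB n)) (fun n => μ' (.phB n)) (fun n => h _) (fun n => h' _)
        (fun n => h _) (fun n => h' _)

/-! #### Generic 3-term associativity helper -/

lemma assoc3_aux {α : Type*} [MeasurableSpace α] [Sat α] [Countable α]
    (κ1 κ2 κ3 : Measure α) (v : System → α → α)
    (hv : ∀ X : System, ∀ ⦃x y : α⦄, Sat.R x y → Sat.R (v X x) (v X y))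
    (hcong : ∀ {X Y : System}, SCong X Y → ∀ x, Sat.R (v X x) (v Y x))
    (hvv : ∀ (X Y : System) (x : α), Sat.R (v Y (v X x)) (v (X.comp Y) x))
    (P Q R : System) :
    κ1.map (v (Q.comp R)) + (κ2.map (v R) + κ3.map (v Q)).map (v P)
      = (κ1.map (v Q) + κ2.map (v P)).map (v R) + κ3.map (v (P.comp Q)) := by
  have fuse : ∀ (κ : Measure α) (X Y : System),
      (κ.map (v X)).map (v Y) = κ.map (v (X.comp Y)) :=
    fun κ X Y => map_map_congr (hv X) (hv Y) (hv _) (hvv X Y) κ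
  have mc : ∀ (κ : Measure α) {X Y : System}, SCong X Y → κ.map (v X) = κ.map (v Y) :=
    fun κ X Y h => map_sat_congr (hv X) (hv Y) (hcong h) κ
  rw [Measure.map_add _ _ (measurable_of_sat (hv P)),
    Measure.map_add _ _ (measurable_of_sat (hv R)), fuse, fuse, fuse, fuse,
    mc κ2 (SCong.compComm R P), mc κ3 (SCong.compComm Q P),
    mc κ3 (SCong.compComm P Q)]
  abel

end Brane

namespace Brane

/-! #### Canonical fused functions for the id-label associativity -/

def PhiF (X : System) :
    (System × System) × (Membrane × Membrane × System × System) → System := fun z =>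
  ((System.cell z.2.1 ((System.cell z.2.2.1 z.1.1).comp z.2.2.2.1)).comp
    (z.1.2.comp z.2.2.2.2)).comp X

def PhiG (X : System) :
    (Membrane × Membrane × System × System) × (System × System) → System := fun z =>
  ((System.cell z.1.1 ((System.cell z.1.2.1 z.2.1).comp z.1.2.2.1)).comp
    (z.1.2.2.2.comp z.2.2)).comp X

lemma presPhiF (X : System) : ∀ ⦃x y⦄, Sat.R x y → Sat.R (PhiF X x) (PhiF X y) :=
  fun _ _ h => SCong.comp X (presF h)

lemma presPhiG (X : System) : ∀ ⦃x y⦄, Sat.R x y → Sat.R (PhiG X x) (PhiG X y) :=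
  fun _ _ h => SCong.comp X (presG h)

lemma presIdU (X : System) :
    ∀ ⦃x y : (System × System) × (Membrane × Membrane × System × System)⦄, Sat.R x y →
      Sat.R (Prod.map id (fun p4 : Membrane × Membrane × System × System =>
          (p4.1, p4.2.1, p4.2.2.1, p4.2.2.2.comp X)) x)
        (Prod.map id (fun p4 : Membrane × Membrane × System × System =>
          (p4.1, p4.2.1, p4.2.2.1, p4.2.2.2.comp X)) y) := by
  rintro x y ⟨h1, h2⟩
  exact ⟨h1, presC4 X h2⟩

lemma presVId (X : System) :
    ∀ ⦃x y : (System × System) × (Membrane × Membrane × System × System)⦄, Sat.R x y →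
      Sat.R (Prod.map (fun p2 : System × System => (p2.1, p2.2.comp X)) id x)
        (Prod.map (fun p2 : System × System => (p2.1, p2.2.comp X)) id y) := by
  rintro x y ⟨h1, h2⟩
  exact ⟨presC2 X h1, h2⟩

lemma presIdV (X : System) :
    ∀ ⦃x y : (Membrane × Membrane × System × System) × (System × System)⦄, Sat.R x y →
      Sat.R (Prod.map id (fun p2 : System × System => (p2.1, p2.2.comp X)) x)
        (Prod.map id (fun p2 : System × System => (p2.1, p2.2.comp X)) y) := by
  rintro x y ⟨h1, h2⟩
  exact ⟨h1, presC2 X h2⟩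

lemma presUId (X : System) :
    ∀ ⦃x y : (Membrane × Membrane × System × System) × (System × System)⦄, Sat.R x y →
      Sat.R (Prod.map (fun p4 : Membrane × Membrane × System × System =>
          (p4.1, p4.2.1, p4.2.2.1, p4.2.2.2.comp X)) id x)
        (Prod.map (fun p4 : Membrane × Membrane × System × System =>
          (p4.1, p4.2.1, p4.2.2.1, p4.2.2.2.comp X)) id y) := by
  rintro x y ⟨h1, h2⟩
  exact ⟨presC4 X h1, h2⟩

/-! #### Fusion lemmas into canonical form -/

lemma fuse_F_c (X : System)
    (κ : Measure ((System × System) × (Membrane × Membrane × System × System))) :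
    ((κ.map (fun q : (System × System) × (Membrane × Membrane × System × System) =>
        (System.cell q.2.1 ((System.cell q.2.2.1 q.1.1).comp q.2.2.2.1)).comp
          (q.1.2.comp q.2.2.2.2))).map (fun x => x.comp X))
      = κ.map (PhiF X) :=
  map_map_congr presF (presC1 X) (presPhiF X) (fun _ => Sat.refl _) κ

lemma fuse_G_c (X : System)
    (κ : Measure ((Membrane × Membrane × System × System) × (System × System))) :
    ((κ.map (fun q : (Membrane × Membrane × System × System) × (System × System) =>
        (System.cell q.1.1 ((System.cell q.1.2.1 q.2.1).comp q.1.2.2.1)).comp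
          (q.1.2.2.2.comp q.2.2))).map (fun x => x.comp X))
      = κ.map (PhiG X) :=
  map_map_congr presG (presC1 X) (presPhiG X) (fun _ => Sat.refl _) κ

lemma fuse_idU_F (X : System)
    (κ : Measure ((System × System) × (Membrane × Membrane × System × System))) :
    ((κ.map (Prod.map id (fun p4 : Membrane × Membrane × System × System =>
        (p4.1, p4.2.1, p4.2.2.1, p4.2.2.2.comp X)))).map
        (fun q : (System × System) × (Membrane × Membrane × System × System) =>
          (System.cell q.2.1 ((System.cell q.2.2.1 q.1.1).comp q.2.2.2.1)).comp
            (q.1.2.comp q.2.2.2.2)))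
      = κ.map (PhiF X) := by
  refine map_map_congr (presIdU X) presF (presPhiF X) ?_ κ
  intro z
  exact (SCong.comp_right _ (SCong.compAssoc z.1.2 z.2.2.2.2 X)).trans
    (SCong.compAssoc _ _ X)

lemma fuse_vId_F (X : System)
    (κ : Measure ((System × System) × (Membrane × Membrane × System × System))) :
    ((κ.map (Prod.map (fun p2 : System × System => (p2.1, p2.2.comp X)) id)).map
        (fun q : (System × System) × (Membrane × Membrane × System × System) =>
          (System.cell q.2.1 ((System.cell q.2.2.1 q.1.1).comp q.2.2.2.1)).comp
            (q.1.2.comp q.2.2.2.2)))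
      = κ.map (PhiF X) := by
  refine map_map_congr (presVId X) presF (presPhiF X) ?_ κ
  intro z
  exact (SCong.comp_right _ (SCong.rot z.1.2 z.2.2.2.2 X)).trans
    (SCong.compAssoc _ _ X)

lemma fuse_idV_G (X : System)
    (κ : Measure ((Membrane × Membrane × System × System) × (System × System))) :
    ((κ.map (Prod.map id (fun p2 : System × System => (p2.1, p2.2.comp X)))).map
        (fun q : (Membrane × Membrane × System × System) × (System × System) =>
          (System.cell q.1.1 ((System.cell q.1.2.1 q.2.1).comp q.1.2.2.1)).comp
            (q.1.2.2.2.comp q.2.2)))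
      = κ.map (PhiG X) := by
  refine map_map_congr (presIdV X) presG (presPhiG X) ?_ κ
  intro z
  exact (SCong.comp_right _ (SCong.compAssoc z.1.2.2.2 z.2.2 X)).trans
    (SCong.compAssoc _ _ X)

lemma fuse_uId_G (X : System)
    (κ : Measure ((Membrane × Membrane × System × System) × (System × System))) :
    ((κ.map (Prod.map (fun p4 : Membrane × Membrane × System × System =>
        (p4.1, p4.2.1, p4.2.2.1, p4.2.2.2.comp X)) id)).map
        (fun q : (Membrane × Membrane × System × System) × (System × System) =>
          (System.cell q.1.1 ((System.cell q.1.2.1 q.2.1).comp q.1.2.2.1)).comp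
            (q.1.2.2.2.comp q.2.2)))
      = κ.map (PhiG X) := by
  refine map_map_congr (presUId X) presG (presPhiG X) ?_ κ
  intro z
  exact (SCong.comp_right _ (SCong.rot z.1.2.2.2 z.2.2 X)).trans
    (SCong.compAssoc _ _ X)

/-! #### One-measure map lemmas -/

lemma fuse_c_c (κ : Measure System) (X Y : System) :
    (κ.map (fun x => x.comp X)).map (fun x => x.comp Y)
      = κ.map (fun x => (x.comp X).comp Y) :=
  map_map_congr (presC1 X) (presC1 Y) (fun _ _ h => SCong.comp Y (SCong.comp X h))
    (fun _ => Sat.refl _) κ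

lemma map_cc (κ : Measure System) (X Y : System) :
    κ.map (fun x => x.comp (X.comp Y)) = κ.map (fun x => (x.comp X).comp Y) :=
  map_sat_congr (presC1 _) (fun _ _ h => SCong.comp Y (SCong.comp X h))
    (fun x => SCong.compAssoc x X Y) κ

lemma map_cc_swap (κ : Measure System) (X Y : System) :
    κ.map (fun x => (x.comp X).comp Y) = κ.map (fun x => (x.comp Y).comp X) :=
  map_sat_congr (fun _ _ h => SCong.comp Y (SCong.comp X h))
    (fun _ _ h => SCong.comp X (SCong.comp Y h))
    (fun x => SCong.rot x Y X) κ

end Brane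

namespace Brane

lemma mcomp_id_assoc_aux (ι : Name → ℝ≥0∞) (P Q R : System)
    (a b c : Measure System)
    (p q r : Name → Measure (System × System))
    (A B C : Name → Measure (Membrane × Membrane × System × System))
    (hp : ∀ n, SFinite (p n)) (hq : ∀ n, SFinite (q n)) (hr : ∀ n, SFinite (r n))
    (hA : ∀ n, SFinite (A n)) (hB : ∀ n, SFinite (B n)) (hC : ∀ n, SFinite (C n)) :
    a.map (fun x => x.comp (Q.comp R))
      + (b.map (fun x => x.comp R) + c.map (fun x => x.comp Q)
          + Measure.sum (fun n : Name => (ι n)⁻¹ • (((q n).prod (C n)).map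
              (fun z : (System × System) × (Membrane × Membrane × System × System) =>
                (System.cell z.2.1 ((System.cell z.2.2.1 z.1.1).comp z.2.2.2.1)).comp
                  (z.1.2.comp z.2.2.2.2))))
          + Measure.sum (fun n : Name => (ι n)⁻¹ • (((B n).prod (r n)).map
              (fun z : (Membrane × Membrane × System × System) × (System × System) =>
                (System.cell z.1.1 ((System.cell z.1.2.1 z.2.1).comp z.1.2.2.1)).comp
                  (z.1.2.2.2.comp z.2.2))))).map (fun x => x.comp P)
      + Measure.sum (fun n : Name => (ι n)⁻¹ •
          (((p n).prod ((B n).map (fun p4 : Membrane × Membrane × System × System =>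
                (p4.1, p4.2.1, p4.2.2.1, p4.2.2.2.comp R))
              + (C n).map (fun p4 : Membrane × Membrane × System × System =>
                (p4.1, p4.2.1, p4.2.2.1, p4.2.2.2.comp Q)))).map
            (fun z : (System × System) × (Membrane × Membrane × System × System) =>
              (System.cell z.2.1 ((System.cell z.2.2.1 z.1.1).comp z.2.2.2.1)).comp
                (z.1.2.comp z.2.2.2.2))))
      + Measure.sum (fun n : Name => (ι n)⁻¹ •
          (((A n).prod ((q n).map (fun p2 : System × System => (p2.1, p2.2.comp R))
              + (r n).map (fun p2 : System × System => (p2.1, p2.2.comp Q)))).map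
            (fun z : (Membrane × Membrane × System × System) × (System × System) =>
              (System.cell z.1.1 ((System.cell z.1.2.1 z.2.1).comp z.1.2.2.1)).comp
                (z.1.2.2.2.comp z.2.2))))
    = (a.map (fun x => x.comp Q) + b.map (fun x => x.comp P)
          + Measure.sum (fun n : Name => (ι n)⁻¹ • (((p n).prod (B n)).map
              (fun z : (System × System) × (Membrane × Membrane × System × System) =>
                (System.cell z.2.1 ((System.cell z.2.2.1 z.1.1).comp z.2.2.2.1)).comp
                  (z.1.2.comp z.2.2.2.2))))
          + Measure.sum (fun n : Name => (ι n)⁻¹ • (((A n).prod (q n)).map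
              (fun z : (Membrane × Membrane × System × System) × (System × System) =>
                (System.cell z.1.1 ((System.cell z.1.2.1 z.2.1).comp z.1.2.2.1)).comp
                  (z.1.2.2.2.comp z.2.2))))).map (fun x => x.comp R)
      + c.map (fun x => x.comp (P.comp Q))
      + Measure.sum (fun n : Name => (ι n)⁻¹ •
          ((((p n).map (fun p2 : System × System => (p2.1, p2.2.comp Q))
              + (q n).map (fun p2 : System × System => (p2.1, p2.2.comp P))).prod (C n)).map
            (fun z : (System × System) × (Membrane × Membrane × System × System) =>
              (System.cell z.2.1 ((System.cell z.2.2.1 z.1.1).comp z.2.2.2.1)).comp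
                (z.1.2.comp z.2.2.2.2))))
      + Measure.sum (fun n : Name => (ι n)⁻¹ •
          ((((A n).map (fun p4 : Membrane × Membrane × System × System =>
                (p4.1, p4.2.1, p4.2.2.1, p4.2.2.2.comp Q))
              + (B n).map (fun p4 : Membrane × Membrane × System × System =>
                (p4.1, p4.2.1, p4.2.2.1, p4.2.2.2.comp P))).prod (r n)).map
            (fun z : (Membrane × Membrane × System × System) × (System × System) =>
              (System.cell z.1.1 ((System.cell z.1.2.1 z.2.1).comp z.1.2.2.1)).comp
                (z.1.2.2.2.comp z.2.2)))) := by
  haveI := hp; haveI := hq; haveI := hr; haveI := hA; haveI := hB; haveI := hC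
  have mcP := measurable_of_sat (presC1 P)
  have mcR := measurable_of_sat (presC1 R)
  have mF := measurable_of_sat (presF)
  have mG := measurable_of_sat (presG)
  have eL3 : ∀ n : Name,
      ((p n).prod ((B n).map (fun p4 : Membrane × Membrane × System × System =>
            (p4.1, p4.2.1, p4.2.2.1, p4.2.2.2.comp R))
          + (C n).map (fun p4 : Membrane × Membrane × System × System =>
            (p4.1, p4.2.1, p4.2.2.1, p4.2.2.2.comp Q)))).map
        (fun z : (System × System) × (Membrane × Membrane × System × System) =>
          (System.cell z.2.1 ((System.cell z.2.2.1 z.1.1).comp z.2.2.2.1)).comp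
            (z.1.2.comp z.2.2.2.2))
      = ((p n).prod (B n)).map (PhiF R) + ((p n).prod (C n)).map (PhiF Q) := by
    intro n
    rw [Measure.prod_add, Measure.map_add _ _ mF,
      my_prod_map_r _ _ (measurable_of_sat (presC4 R)),
      my_prod_map_r _ _ (measurable_of_sat (presC4 Q)), fuse_idU_F, fuse_idU_F]
  have eL4 : ∀ n : Name,
      ((A n).prod ((q n).map (fun p2 : System × System => (p2.1, p2.2.comp R))
          + (r n).map (fun p2 : System × System => (p2.1, p2.2.comp Q)))).map
        (fun z : (Membrane × Membrane × System × System) × (System × System) =>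
          (System.cell z.1.1 ((System.cell z.1.2.1 z.2.1).comp z.1.2.2.1)).comp
            (z.1.2.2.2.comp z.2.2))
      = ((A n).prod (q n)).map (PhiG R) + ((A n).prod (r n)).map (PhiG Q) := by
    intro n
    rw [Measure.prod_add, Measure.map_add _ _ mG,
      my_prod_map_r _ _ (measurable_of_sat (presC2 R)),
      my_prod_map_r _ _ (measurable_of_sat (presC2 Q)), fuse_idV_G, fuse_idV_G]
  have eR3 : ∀ n : Name,
      (((p n).map (fun p2 : System × System => (p2.1, p2.2.comp Q))
          + (q n).map (fun p2 : System × System => (p2.1, p2.2.comp P))).prod (C n)).map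
        (fun z : (System × System) × (Membrane × Membrane × System × System) =>
          (System.cell z.2.1 ((System.cell z.2.2.1 z.1.1).comp z.2.2.2.1)).comp
            (z.1.2.comp z.2.2.2.2))
      = ((p n).prod (C n)).map (PhiF Q) + ((q n).prod (C n)).map (PhiF P) := by
    intro n
    rw [Measure.add_prod, Measure.map_add _ _ mF,
      my_prod_map_l _ _ (measurable_of_sat (presC2 Q)),
      my_prod_map_l _ _ (measurable_of_sat (presC2 P)), fuse_vId_F, fuse_vId_F]
  have eR4 : ∀ n : Name,
      (((A n).map (fun p4 : Membrane × Membrane × System × System =>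
            (p4.1, p4.2.1, p4.2.2.1, p4.2.2.2.comp Q))
          + (B n).map (fun p4 : Membrane × Membrane × System × System =>
            (p4.1, p4.2.1, p4.2.2.1, p4.2.2.2.comp P))).prod (r n)).map
        (fun z : (Membrane × Membrane × System × System) × (System × System) =>
          (System.cell z.1.1 ((System.cell z.1.2.1 z.2.1).comp z.1.2.2.1)).comp
            (z.1.2.2.2.comp z.2.2))
      = ((A n).prod (r n)).map (PhiG Q) + ((B n).prod (r n)).map (PhiG P) := by
    intro n
    rw [Measure.add_prod, Measure.map_add _ _ mG,
      my_prod_map_l _ _ (measurable_of_sat (presC4 Q)),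
      my_prod_map_l _ _ (measurable_of_sat (presC4 P)), fuse_uId_G, fuse_uId_G]
  rw [Measure.map_add _ _ mcP, Measure.map_add _ _ mcP, Measure.map_add _ _ mcP,
    Measure.map_add _ _ mcR, Measure.map_add _ _ mcR, Measure.map_add _ _ mcR,
    map_isum _ mcP, map_isum _ mcP, map_isum _ mcR, map_isum _ mcR]
  simp only [fuse_F_c, fuse_G_c, eL3, eL4, eR3, eR4, smul_add]
  rw [msum_add, msum_add, msum_add, msum_add]
  rw [fuse_c_c b R P, fuse_c_c c Q P, fuse_c_c a Q R, fuse_c_c b P R]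
  rw [map_cc a Q R, map_cc c P Q]
  rw [map_cc_swap b R P, map_cc_swap c P Q]
  abel

end Brane

namespace Brane

lemma mcomp_assoc (ι : Name → ℝ≥0∞) (μ1 μ2 μ3 : SMeas) (P Q R : System)
    (h1 : ∀ a, SFinite (μ1 a)) (h2 : ∀ a, SFinite (μ2 a)) (h3 : ∀ a, SFinite (μ3 a)) :
    mcomp ι μ1 (mcomp ι μ2 μ3 Q R) P (Q.comp R)
      = mcomp ι (mcomp ι μ1 μ2 P Q) μ3 (P.comp Q) R := by
  funext x
  cases x with
  | ph n =>
      exact assoc3_aux (show Measure (System × System) from μ1 (.ph n))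
        (show Measure (System × System) from μ2 (.ph n))
        (show Measure (System × System) from μ3 (.ph n))
        (fun X z => (z.1, z.2.comp X)) (fun X => presC2 X)
        (by intro X Y h z; exact ⟨SCong.refl _, SCong.comp_right _ h⟩)
        (by intro X Y z; exact ⟨SCong.refl _, (SCong.compAssoc _ X Y).symm⟩) P Q R
  | phB n =>
      exact assoc3_aux
        (show Measure (Membrane × Membrane × System × System) from μ1 (.phB n))
        (show Measure (Membrane × Membrane × System × System) from μ2 (.phB n))
        (show Measure (Membrane × Membrane × System × System) from μ3 (.phB n))
        (fun X z => (z.1, z.2.1, z.2.2.1, z.2.2.2.comp X)) (fun X => presC4 X)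
        (by intro X Y h z
            exact ⟨MCong.refl _, MCong.refl _, SCong.refl _, SCong.comp_right _ h⟩)
        (by intro X Y z
            exact ⟨MCong.refl _, MCong.refl _, SCong.refl _, (SCong.compAssoc _ X Y).symm⟩)
        P Q R
  | ex n =>
      exact assoc3_aux (show Measure (Membrane × System × System) from μ1 (.ex n))
        (show Measure (Membrane × System × System) from μ2 (.ex n))
        (show Measure (Membrane × System × System) from μ3 (.ex n))
        (fun X z => (z.1, z.2.1, z.2.2.comp X)) (fun X => presC3 X)
        (by intro X Y h z; exact ⟨MCong.refl _, SCong.refl _, SCong.comp_right _ h⟩)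
        (by intro X Y z; exact ⟨MCong.refl _, SCong.refl _, (SCong.compAssoc _ X Y).symm⟩)
        P Q R
  | id =>
      exact mcomp_id_assoc_aux ι P Q R (μ1 .id) (μ2 .id) (μ3 .id)
        (fun n => μ1 (.ph n)) (fun n => μ2 (.ph n)) (fun n => μ3 (.ph n))
        (fun n => μ1 (.phB n)) (fun n => μ2 (.phB n)) (fun n => μ3 (.phB n))
        (fun n => h1 _) (fun n => h2 _) (fun n => h3 _)
        (fun n => h1 _) (fun n => h2 _) (fun n => h3 _)

/-! #### Left congruence for ⊗ -/

lemma map_c1_congr {P Q : System} (h : SCong P Q) (κ : Measure System) :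
    κ.map (fun x => x.comp P) = κ.map (fun x => x.comp Q) :=
  map_sat_congr (presC1 P) (presC1 Q) (fun x => SCong.comp_right x h) κ

lemma map_c2_congr {P Q : System} (h : SCong P Q) (κ : Measure (System × System)) :
    κ.map (fun z : System × System => (z.1, z.2.comp P))
      = κ.map (fun z : System × System => (z.1, z.2.comp Q)) := by
  refine map_sat_congr (presC2 P) (presC2 Q) ?_ κ
  intro z
  exact ⟨SCong.refl _, SCong.comp_right _ h⟩

lemma map_c4_congr {P Q : System} (h : SCong P Q)
    (κ : Measure (Membrane × Membrane × System × System)) :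
    κ.map (fun z : Membrane × Membrane × System × System =>
        (z.1, z.2.1, z.2.2.1, z.2.2.2.comp P))
      = κ.map (fun z : Membrane × Membrane × System × System =>
        (z.1, z.2.1, z.2.2.1, z.2.2.2.comp Q)) := by
  refine map_sat_congr (presC4 P) (presC4 Q) ?_ κ
  intro z
  exact ⟨MCong.refl _, MCong.refl _, SCong.refl _, SCong.comp_right _ h⟩

lemma map_c3_congr {P Q : System} (h : SCong P Q)
    (κ : Measure (Membrane × System × System)) :
    κ.map (fun z : Membrane × System × System => (z.1, z.2.1, z.2.2.comp P))
      = κ.map (fun z : Membrane × System × System => (z.1, z.2.1, z.2.2.comp Q)) := by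
  refine map_sat_congr (presC3 P) (presC3 Q) ?_ κ
  intro z
  exact ⟨MCong.refl _, SCong.refl _, SCong.comp_right _ h⟩

lemma mcc_aux {α : Type*} [MeasurableSpace α] {κ κ' : Measure α} (t : Measure α)
    (e : κ = κ') : t + κ = t + κ' := by rw [e]

lemma mcc_aux4 {t x y : Measure System} {κ κ' : Measure System}
    (e : κ = κ') : t + κ + x + y = t + κ' + x + y := by rw [e]

lemma mcomp_congr_left (ι : Name → ℝ≥0∞) (μ μ' : SMeas) {P Q : System} (R' : System)
    (h : SCong P Q) : mcomp ι μ μ' P R' = mcomp ι μ μ' Q R' := by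
  funext a
  cases a with
  | ph n => exact mcc_aux _ (map_c2_congr h (μ' (.ph n)))
  | phB n => exact mcc_aux _ (map_c4_congr h (μ' (.phB n)))
  | ex n => exact mcc_aux _ (map_c3_congr h (μ' (.ex n)))
  | id => exact mcc_aux4 (e := map_c1_congr h (μ' .id))

/-! #### The main congruence theorem for systems -/

theorem strans_iff {ι : Name → ℝ≥0∞} {P Q : System} (h : SCong P Q) :
    ∀ μ : SMeas, STrans ι P μ ↔ STrans ι Q μ := by
  induction h with
  | refl P => exact fun μ => Iff.rfl
  | symm _ ih => exact fun μ => (ih μ).symm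
  | trans _ _ ih1 ih2 => exact fun μ => (ih1 μ).trans (ih2 μ)
  | compComm P Q =>
      intro μ
      constructor
      · intro ht
        cases ht with
        | comp h1 h2 =>
            have := STrans.comp h2 h1
            rwa [mcomp_comm ι _ _ _ _ (STrans.sfinite h2) (STrans.sfinite h1)] at this
      · intro ht
        cases ht with
        | comp h1 h2 =>
            have := STrans.comp h2 h1
            rwa [mcomp_comm ι _ _ _ _ (STrans.sfinite h2) (STrans.sfinite h1)] at this
  | compAssoc P Q R =>
      intro μ
      constructor
      · intro ht
        cases ht with
        | comp h1 h23 =>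
            cases h23 with
            | comp h2 h3 =>
                have := STrans.comp (STrans.comp h1 h2) h3
                rwa [← mcomp_assoc ι _ _ _ _ _ _ (STrans.sfinite h1) (STrans.sfinite h2)
                  (STrans.sfinite h3)] at this
      · intro ht
        cases ht with
        | comp h12 h3 =>
            cases h12 with
            | comp h1 h2 =>
                have := STrans.comp h1 (STrans.comp h2 h3)
                rwa [mcomp_assoc ι _ _ _ _ _ _ (STrans.sfinite h1) (STrans.sfinite h2)
                  (STrans.sfinite h3)] at this
  | compVoid P =>
      intro μ
      constructor
      · intro ht
        cases ht with
        | comp h1 h2 =>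
            cases h2
            rw [mcomp_void]
            exact h1
      · intro ht
        have := STrans.comp ht STrans.void
        rwa [mcomp_void] at this
  | zeroVoid =>
      intro μ
      constructor
      · intro ht
        cases ht with
        | cell hm hs =>
            cases hm
            cases hs
            rw [mnest_zero]
            exact STrans.void
      · intro ht
        cases ht
        rw [← mnest_zero (ι := ι)]
        exact STrans.cell MTrans.zero STrans.void
  | comp R h ih =>
      intro μ
      constructor
      · intro ht
        cases ht with
        | comp h1 h2 =>
            have := STrans.comp ((ih _).mp h1) h2
            rwa [mcomp_congr_left ι _ _ _ h.symm] at this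
      · intro ht
        cases ht with
        | comp h1 h2 =>
            have := STrans.comp ((ih _).mpr h1) h2
            rwa [mcomp_congr_left ι _ _ _ h] at this
  | cell hm hs ih =>
      intro μ
      constructor
      · intro ht
        cases ht with
        | cell hmem hsys =>
            have := STrans.cell ((mtrans_iff hm _).mp hmem) ((ih _).mp hsys)
            rwa [mnest_congr ι _ _ hm.symm hs.symm] at this
      · intro ht
        cases ht with
        | cell hmem hsys =>
            have := STrans.cell ((mtrans_iff hm _).mpr hmem) ((ih _).mpr hsys)
            rwa [mnest_congr ι _ _ hm hs] at this

end Brane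

namespace Brane

/-- the stochastic transition relation respects structural
congruence: if M ≡ N and M → μ then N → μ (for both sorts of terms). -/
theorem stochastic_transition_respects_congruence (ι : Name → ℝ≥0∞)
    (hι : ∀ n : Name, 0 < ι n ∧ ι n ≠ ⊤) :
    (∀ (σ τ : Membrane) (μ : MMeas), MCong σ τ → MTrans ι σ μ → MTrans ι τ μ) ∧
    (∀ (P Q : System) (μ : SMeas), SCong P Q → STrans ι P μ → STrans ι Q μ) :=
  ⟨fun _ _ μ h ht => (mtrans_iff h μ).mp ht,
   fun _ _ μ h ht => (strans_iff h μ).mp ht⟩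

end Brane
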